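/- arXiv:2005.04354 — 3 statements merged into one kernel-verified Lean document; each statement's English description precedes it below -/
import Mathlib

section
/- Let θ ∈ (0, 1/2), let P = P_{T,θ} on {0,1}³ for the tree T with edge set {{1,2},{2,3}}, and let x_1,…,x_n be i.i.d. samples from P. Then lim_{n→∞} −(1/n)·log ℙ({Â_{1,3} ≥ Â_{1,2}} ∩ {Â_{1,3} ≥ Â_{2,3}}) = −log(1 − θ·[2 − θ − 3·θ^{1/3}·(1−θ)^{2/3}]), and this value is strictly greater than K(θ) := −log(1 − θ·(1 − √(4θ(1−θ)))). -/
open scoped Classical BigOperators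
open Filter

noncomputable section

/-- Symmetric pair weight `w(x i, x j)` lifted to unordered pairs. -/
def pairWeight (θ : ℝ) {p : ℕ} (x : Fin p → Bool) : Sym2 (Fin p) → ℝ :=
  Sym2.lift ⟨fun i j => if x i = x j then 1 - θ else θ, fun i j => by
    dsimp only
    by_cases h : x i = x j
    · rw [if_pos h, if_pos h.symm]
    · rw [if_neg h, if_neg (fun hh => h hh.symm)]⟩

/-- The homogeneous zero-external-field Ising tree distribution. -/
def isingP (θ : ℝ) {p : ℕ} (T : SimpleGraph (Fin p)) (x : Fin p → Bool) : ℝ :=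
  (1 / 2) * ∏ e ∈ T.edgeFinset, pairWeight θ x e

/-- Probability of an event `A` about `n` i.i.d. samples from pmf `P`. -/
def iidProb {p : ℕ} (P : (Fin p → Bool) → ℝ) (n : ℕ)
    (A : Set (Fin n → Fin p → Bool)) : ℝ :=
  ∑ xs : Fin n → Fin p → Bool, if xs ∈ A then ∏ k, P (xs k) else 0

/-- Empirical agreement weight. -/
def Ahat {p n : ℕ} (xs : Fin n → Fin p → Bool) (i j : Fin p) : ℝ :=
  ((Finset.univ.filter (fun k : Fin n => xs k i = xs k j)).card : ℝ) / n

/-- Empirical agreement weight on unordered pairs. -/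
def AhatSym {p n : ℕ} (xs : Fin n → Fin p → Bool) : Sym2 (Fin p) → ℝ :=
  Sym2.lift ⟨fun i j => Ahat xs i j, fun i j => by
    have h : (Finset.univ.filter fun k : Fin n => xs k i = xs k j)
        = (Finset.univ.filter fun k : Fin n => xs k j = xs k i) :=
      Finset.filter_congr (fun k _ => ⟨Eq.symm, Eq.symm⟩)
    simp only [Ahat, h]⟩

/-- The path (Markov chain) tree on 3 nodes with edges {1,2},{2,3}. -/
def chainA : SimpleGraph (Fin 3) := SimpleGraph.fromEdgeSet {s(0,1), s(1,2)}

def chainB : SimpleGraph (Fin 3) := SimpleGraph.fromEdgeSet {s(0,2), s(1,2)}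

def chainC : SimpleGraph (Fin 3) := SimpleGraph.fromEdgeSet {s(0,1), s(0,2)}

def path4 : SimpleGraph (Fin 4) := SimpleGraph.fromEdgeSet {s(0,1), s(1,2), s(2,3)}

def Kexp (θ : ℝ) : ℝ := -Real.log (1 - θ * (1 - Real.sqrt (4 * θ * (1 - θ))))

def sigmaSq (θ : ℝ) : ℝ := θ * Real.sqrt (4 * θ * (1 - θ)) * Real.exp (Kexp θ)

def zTheta (θ : ℝ) : ℝ := Real.sqrt (θ / (1 - θ))

def ftilde (θ : ℝ) (n : ℕ) : ℝ :=
  Real.exp (-(n : ℝ) * Kexp θ) / Real.sqrt (2 * Real.pi * sigmaSq θ * n)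
    * (1 + (1 - 3 * sigmaSq θ) / (8 * sigmaSq θ * n))

def fn (θ : ℝ) (n : ℕ) : ℝ :=
  ftilde θ n / (1 - zTheta θ)
    * (1 - zTheta θ * (1 + zTheta θ) / (2 * (1 - zTheta θ) ^ 2 * sigmaSq θ * n))

/-- Hamming distance. -/
def hamming {p : ℕ} (x y : Fin p → Bool) : ℕ :=
  (Finset.univ.filter (fun i => x i ≠ y i)).card

/-- Noisy (BSC with crossover probability q) version of a distribution. -/
def noisy (q : ℝ) {p : ℕ} (P : (Fin p → Bool) → ℝ) (y : Fin p → Bool) : ℝ :=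
  ∑ x : Fin p → Bool, q ^ hamming x y * (1 - q) ^ (p - hamming x y) * P x

def beta1 (θ q : ℝ) : ℝ :=
  ((1 - q) ^ 3 + q ^ 3) * (θ * (1 - θ) / 2) + q * (1 - q) * ((1 - θ * (1 - θ)) / 2)

def beta2 (θ q : ℝ) : ℝ :=
  ((1 - q) ^ 3 + q ^ 3) * (θ ^ 2 / 2) + q * (1 - q) * ((1 - θ ^ 2) / 2)

def Kq (θ q : ℝ) : ℝ :=
  -Real.log (1 - 4 * ((beta1 θ q + beta2 θ q) / 2 - Real.sqrt (beta1 θ q * beta2 θ q)))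

def mu2 (θ q : ℝ) : ℝ := 4 * Real.sqrt (beta1 θ q * beta2 θ q) * Real.exp (Kq θ q)

def zq (θ q : ℝ) : ℝ := Real.sqrt (beta2 θ q / beta1 θ q)

def ftildeq (θ q : ℝ) (n : ℕ) : ℝ :=
  Real.exp (-(n : ℝ) * Kq θ q) / Real.sqrt (2 * Real.pi * mu2 θ q * n)
    * (1 + (1 - 3 * mu2 θ q) / (8 * mu2 θ q * n))

def fnq (θ q : ℝ) (n : ℕ) : ℝ :=
  ftildeq θ q n / (1 - zq θ q)
    * (1 - zq θ q * (1 + zq θ q) / (2 * (1 - zq θ q) ^ 2 * mu2 θ q * n))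

/-- Marginal of a pmf on `{0,1}^p` on a single coordinate. -/
def marg1 {p : ℕ} (Q : (Fin p → Bool) → ℝ) (i : Fin p) (a : Bool) : ℝ :=
  ∑ x ∈ Finset.univ.filter (fun x : Fin p → Bool => x i = a), Q x

/-- Marginal of a pmf on `{0,1}^p` on a pair of coordinates. -/
def marg2 {p : ℕ} (Q : (Fin p → Bool) → ℝ) (i j : Fin p) (a b : Bool) : ℝ :=
  ∑ x ∈ Finset.univ.filter (fun x : Fin p → Bool => x i = a ∧ x j = b), Q x

/-- Kullback-Leibler divergence between pmfs on a finite type. -/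
def klDiv {X : Type*} [Fintype X] (Q P : X → ℝ) : ℝ :=
  ∑ x : X, Q x * Real.log (Q x / P x)

/-- Empirical mutual information between coordinates `i` and `j`. -/
def mutInf {p : ℕ} (Q : (Fin p → Bool) → ℝ) (i j : Fin p) : ℝ :=
  ∑ a : Bool, ∑ b : Bool,
    marg2 Q i j a b * Real.log (marg2 Q i j a b / (marg1 Q i a * marg1 Q j b))

namespace S12

open Finset

def pat (x : Fin 3 → Bool) : Fin 4 :=
  if x 0 = x 1 then (if x 1 = x 2 then 0 else 1) else (if x 1 = x 2 then 2 else 3)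

def tv (θ : ℝ) : ℝ := θ ^ ((4:ℝ)/3) * (1-θ) ^ ((2:ℝ)/3)

def Mv (θ : ℝ) : ℝ := (1-θ)^2 + 3 * tv θ

def pw (θ : ℝ) : Fin 4 → ℝ := ![(1-θ)^2, (1-θ)*θ, (1-θ)*θ, θ^2]

def gpw (θ : ℝ) : Fin 4 → ℝ := ![(1-θ)^2, tv θ, tv θ, tv θ]

def gw (θ : ℝ) (x : Fin 3 → Bool) : ℝ := (1/2) * gpw θ (pat x)

lemma edgeFinset_chainA : chainA.edgeFinset = ({s(0,1), s(1,2)} : Finset (Sym2 (Fin 3))) := by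
  ext e
  refine e.ind fun i j => ?_
  rw [SimpleGraph.mem_edgeFinset]
  show chainA.Adj i j ↔ _
  rw [chainA, SimpleGraph.fromEdgeSet_adj]
  fin_cases i <;> fin_cases j <;> simp <;> decide

lemma isingP_eq (θ : ℝ) (x : Fin 3 → Bool) : isingP θ chainA x = (1/2) * pw θ (pat x) := by
  rw [isingP, edgeFinset_chainA]
  have hne : (s(0,1) : Sym2 (Fin 3)) ≠ s(1,2) := by decide
  rw [Finset.prod_insert (by simp [hne]), Finset.prod_singleton]
  show (1/2 : ℝ) * ((if x 0 = x 1 then 1 - θ else θ) * (if x 1 = x 2 then 1 - θ else θ)) = _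
  unfold pat pw
  by_cases h1 : x 0 = x 1 <;> by_cases h2 : x 1 = x 2
  · rw [if_pos h1, if_pos h2, if_pos h1, if_pos h2]; norm_num <;> ring
  · rw [if_pos h1, if_neg h2, if_pos h1, if_neg h2]; norm_num <;> ring
  · rw [if_neg h1, if_pos h2, if_neg h1, if_pos h2]; show (1/2:ℝ) * (θ * (1-θ)) = (1/2) * ((1-θ)*θ); ring
  · rw [if_neg h1, if_neg h2, if_neg h1, if_neg h2]; show (1/2:ℝ) * (θ * θ) = (1/2) * (θ^2); ring


lemma key_pow_abs (A B T : ℝ) (hA : 0 ≤ A) (hAB : A ≤ B) (hT : 0 ≤ T)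
    (hT3 : T^3 = A^4*B^2) (m k : ℕ) (hmk : m ≤ 2*k) :
    (B*A)^m * (A^2)^k ≤ T^(m+k) := by
  have hB : 0 ≤ B := le_trans hA hAB
  refine le_of_pow_le_pow_left₀ (n := 3) (by norm_num) (by positivity) ?_
  obtain ⟨j, hj⟩ : ∃ j, 2*k = m + j := ⟨2*k - m, by omega⟩
  have hABj : A^j ≤ B^j := pow_le_pow_left₀ hA hAB j
  have e2 : A^(6*k) = A^(3*m) * A^(3*j) := by rw [← pow_add, show 3*m+3*j = 6*k by omega]
  have e4 : A^(4*(m+k)) = A^(6*m) * A^(2*j) := by rw [← pow_add, show 6*m+2*j = 4*(m+k) by omega]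
  have e5 : B^(2*(m+k)) = B^(3*m) * B^j := by rw [← pow_add, show 3*m+j = 2*(m+k) by omega]
  have sA : ((B*A)^m * (A^2)^k)^3 = B^(3*m)*A^(3*m)*A^(6*k) := by ring
  have sB : A^(6*k) = A^(3*m)*A^(3*j) := by rw [← pow_add, show 3*m+3*j = 6*k by omega]
  have sC : (A^4*B^2)^(m+k) = A^(4*(m+k))*B^(2*(m+k)) := by
    rw [mul_pow, ← pow_mul, ← pow_mul]
  calc ((B*A)^m * (A^2)^k)^3
      = (B^(3*m) * A^(6*m) * A^(2*j)) * A^j := by rw [sA, sB]; ring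
    _ ≤ (B^(3*m) * A^(6*m) * A^(2*j)) * B^j :=
        mul_le_mul_of_nonneg_left hABj (by positivity)
    _ = (T^(m+k))^3 := by
        rw [show (T^(m+k))^3 = (T^3)^(m+k) by rw [← pow_mul, ← pow_mul, Nat.mul_comm], hT3, sC,
          show 4*(m+k) = 6*m+2*j by omega, show 2*(m+k) = 3*m+j by omega,
          pow_add, pow_add]
        ring


variable {n : ℕ}

def cnt (α : Fin 4) (xs : Fin n → Fin 3 → Bool) : ℕ :=
  (univ.filter fun k => pat (xs k) = α).card

lemma sum_cnt (xs : Fin n → Fin 3 → Bool) : ∑ α : Fin 4, cnt α xs = n := by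
  have := Finset.card_eq_sum_card_fiberwise
    (f := fun k : Fin n => pat (xs k)) (s := univ) (t := univ) (fun x _ => mem_univ _)
  simpa [cnt] using this.symm

lemma prod_pat (f : Fin 4 → ℝ) (xs : Fin n → Fin 3 → Bool) :
    (∏ k, f (pat (xs k))) = ∏ α : Fin 4, f α ^ cnt α xs := by
  rw [← Finset.prod_fiberwise_of_maps_to (g := fun k : Fin n => pat (xs k))
    (t := univ) (fun x _ => mem_univ _) (fun k => f (pat (xs k)))]
  refine Finset.prod_congr rfl fun α _ => ?_
  rw [cnt, ← Finset.prod_const]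
  exact Finset.prod_congr rfl fun k hk => by rw [(Finset.mem_filter.1 hk).2]


def Cls (n : ℕ) (v : Fin 4 → ℕ) : Finset (Fin n → Fin 3 → Bool) :=
  univ.filter fun xs => ∀ γ, cnt γ xs = v γ

def upd2 (v : Fin 4 → ℕ) (α β : Fin 4) : Fin 4 → ℕ :=
  Function.update (Function.update v α (v α - 1)) β (v β + 1)

lemma cnt_base (γ : Fin 4) (p : Fin n) (zs : Fin n → Fin 3 → Bool) :
    cnt γ zs = ((univ.erase p).filter fun k => pat (zs k) = γ).card
      + (if pat (zs p) = γ then 1 else 0) := by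
  rw [cnt]
  nth_rewrite 1 [show (univ : Finset (Fin n)) = insert p (univ.erase p) from
    (Finset.insert_erase (mem_univ p)).symm]
  rw [Finset.filter_insert]
  by_cases h : pat (zs p) = γ
  · rw [if_pos h, if_pos h, Finset.card_insert_of_notMem (by simp)]
  · rw [if_neg h, if_neg h, add_zero]

lemma cnt_update (γ : Fin 4) (p : Fin n) (xs : Fin n → Fin 3 → Bool) (y : Fin 3 → Bool) :
    cnt γ (Function.update xs p y) + (if pat (xs p) = γ then 1 else 0)
      = cnt γ xs + (if pat y = γ then 1 else 0) := by
  have he : ((univ.erase p).filter fun k => pat (Function.update xs p y k) = γ)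
      = ((univ.erase p).filter fun k => pat (xs k) = γ) :=
    Finset.filter_congr fun k hk => by
      rw [Function.update_of_ne (Finset.mem_erase.1 hk).1]
  rw [cnt_base γ p, cnt_base γ p xs, he, Function.update_self]
  omega

lemma swap_card (σ : (Fin 3 → Bool) → (Fin 3 → Bool)) (hσ : ∀ x, σ (σ x) = x)
    (α β : Fin 4) (hne : α ≠ β) (hp : ∀ x, pat x = α ↔ pat (σ x) = β)
    (v : Fin 4 → ℕ) (hvα : 1 ≤ v α) :
    (Cls n v).card * v α = (Cls n (upd2 v α β)).card * (v β + 1) := by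
  have hp' : ∀ x, pat x = β ↔ pat (σ x) = α := by
    intro x
    have h := hp (σ x)
    rw [hσ x] at h
    exact h.symm
  classical
  set S : Finset ((Fin n → Fin 3 → Bool) × Fin n) :=
    (Cls n v ×ˢ univ).filter fun z => pat (z.1 z.2) = α with hS
  set S' : Finset ((Fin n → Fin 3 → Bool) × Fin n) :=
    (Cls n (upd2 v α β) ×ˢ univ).filter fun z => pat (z.1 z.2) = β with hS'
  have hcard : ∀ (w : Fin 4 → ℕ) (δ : Fin 4),
      ((Cls n w ×ˢ univ).filter fun z : (Fin n → Fin 3 → Bool) × Fin n =>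
        pat (z.1 z.2) = δ).card = (Cls n w).card * w δ := by
    intro w δ
    rw [Finset.card_filter, Finset.sum_product]
    rw [Finset.sum_congr rfl (fun xs hxs => ?_), Finset.sum_const, smul_eq_mul]
    have hxs' : ∀ γ, cnt γ xs = w γ := (Finset.mem_filter.1 hxs).2
    rw [← hxs' δ, cnt, Finset.card_filter]
  have hSc : S.card = (Cls n v).card * v α := hcard v α
  have hS'c : S'.card = (Cls n (upd2 v α β)).card * (v β + 1) := by
    rw [hcard (upd2 v α β) β]
    congr 1
    simp [upd2]
  rw [← hSc, ← hS'c]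
  have hvβ' : upd2 v α β β = v β + 1 := by simp [upd2]
  have hvα' : upd2 v α β α = v α - 1 := by
    rw [upd2, Function.update_of_ne hne, Function.update_self]
  have hvo : ∀ γ, γ ≠ α → γ ≠ β → upd2 v α β γ = v γ := fun γ h1 h2 => by
    rw [upd2, Function.update_of_ne h2, Function.update_of_ne h1]
  refine Finset.card_nbij' (fun z => (Function.update z.1 z.2 (σ (z.1 z.2)), z.2))
    (fun z => (Function.update z.1 z.2 (σ (z.1 z.2)), z.2)) ?_ ?_ ?_ ?_
  · rintro ⟨xs, p⟩ hz
    dsimp only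
    obtain ⟨hmem, hpat⟩ := Finset.mem_filter.1 hz
    have hcnt : ∀ γ, cnt γ xs = v γ := (Finset.mem_filter.1 (Finset.mem_product.1 hmem).1).2
    have hpy : pat (σ (xs p)) = β := (hp _).1 hpat
    refine Finset.mem_filter.2 ⟨Finset.mem_product.2 ⟨Finset.mem_filter.2 ⟨mem_univ _, ?_⟩, mem_univ _⟩, ?_⟩
    · intro γ
      show cnt γ (Function.update xs p (σ (xs p))) = _
      have hu := cnt_update γ p xs (σ (xs p))
      by_cases g1 : γ = α
      · subst g1
        rw [hvα']
        rw [if_pos hpat, if_neg (by rw [hpy]; exact hne.symm)] at hu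
        have := hcnt γ
        omega
      · by_cases g2 : γ = β
        · subst g2
          rw [hvβ']
          rw [if_neg (by rw [hpat]; exact fun h => g1 h.symm), if_pos hpy] at hu
          have := hcnt γ
          omega
        · rw [hvo γ g1 g2]
          rw [if_neg (by rw [hpat]; exact fun h => g1 h.symm),
            if_neg (by rw [hpy]; exact fun h => g2 h.symm)] at hu
          have := hcnt γ
          omega
    · show pat (Function.update xs p (σ (xs p)) p) = β
      rw [Function.update_self]
      exact hpy
  · rintro ⟨xs, p⟩ hz
    dsimp only
    obtain ⟨hmem, hpat⟩ := Finset.mem_filter.1 hz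
    have hcnt : ∀ γ, cnt γ xs = upd2 v α β γ := (Finset.mem_filter.1 (Finset.mem_product.1 hmem).1).2
    have hpy : pat (σ (xs p)) = α := (hp' _).1 hpat
    refine Finset.mem_filter.2 ⟨Finset.mem_product.2 ⟨Finset.mem_filter.2 ⟨mem_univ _, ?_⟩, mem_univ _⟩, ?_⟩
    · intro γ
      show cnt γ (Function.update xs p (σ (xs p))) = _
      have hu := cnt_update γ p xs (σ (xs p))
      by_cases g1 : γ = α
      · subst g1
        rw [if_neg (by rw [hpat]; exact fun h => hne h.symm), if_pos hpy] at hu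
        have := hcnt γ
        rw [hvα'] at this
        omega
      · by_cases g2 : γ = β
        · subst g2
          rw [if_pos hpat, if_neg (by rw [hpy]; exact fun h => hne h)] at hu
          have := hcnt γ
          rw [hvβ'] at this
          omega
        · rw [if_neg (by rw [hpat]; exact fun h => g2 h.symm),
            if_neg (by rw [hpy]; exact fun h => g1 h.symm)] at hu
          have := hcnt γ
          rw [hvo γ g1 g2] at this
          omega
    · show pat (Function.update xs p (σ (xs p)) p) = α
      rw [Function.update_self]
      exact hpy
  · rintro ⟨xs, p⟩ _
    dsimp only
    rw [Function.update_self, Function.update_idem, hσ, Function.update_eq_self]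
  · rintro ⟨xs, p⟩ _
    dsimp only
    rw [Function.update_self, Function.update_idem, hσ, Function.update_eq_self]


section KeyPow

variable {θ : ℝ} (hθ0 : 0 < θ) (hθ1 : θ < 1/2)

include hθ0 hθ1

lemma hB0 : (0:ℝ) < 1 - θ := by linarith

lemma tv_pos : 0 < tv θ := by
  have := hB0 hθ0 hθ1
  exact mul_pos (Real.rpow_pos_of_pos hθ0 _) (Real.rpow_pos_of_pos this _)

lemma tv_cube : tv θ ^ 3 = θ^4 * (1-θ)^2 := by
  have hB := (hB0 hθ0 hθ1).le
  have h1 : (θ ^ ((4:ℝ)/3))^(3:ℕ) = θ^(4:ℕ) := by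
    rw [← Real.rpow_natCast (θ ^ ((4:ℝ)/3)) 3, ← Real.rpow_mul hθ0.le,
      show (4:ℝ)/3*(3:ℕ) = ((4:ℕ):ℝ) by push_cast; ring, Real.rpow_natCast]
  have h2 : ((1-θ) ^ ((2:ℝ)/3))^(3:ℕ) = (1-θ)^(2:ℕ) := by
    rw [← Real.rpow_natCast ((1-θ) ^ ((2:ℝ)/3)) 3, ← Real.rpow_mul hB,
      show (2:ℝ)/3*(3:ℕ) = ((2:ℕ):ℝ) by push_cast; ring, Real.rpow_natCast]
  rw [tv, mul_pow, h1, h2]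

lemma key_pow (m k : ℕ) (hmk : m ≤ 2*k) :
    ((1-θ)*θ)^m * (θ^2)^k ≤ tv θ ^ (m+k) :=
  key_pow_abs θ (1-θ) (tv θ) hθ0.le (by linarith) (tv_pos hθ0 hθ1).le
    (tv_cube hθ0 hθ1) m k hmk


end KeyPow

section Weights

variable {θ : ℝ} {n : ℕ} (hθ0 : 0 < θ) (hθ1 : θ < 1/2)

def wval (θ : ℝ) (n : ℕ) (v : Fin 4 → ℕ) : ℝ :=
  (1/2)^n * ((1-θ)^2)^(v 0) * tv θ ^ (v 1 + v 2 + v 3)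

def Fw (θ : ℝ) (n : ℕ) (v : Fin 4 → ℕ) : ℝ := ∑ xs ∈ Cls n v, ∏ k, gw θ (xs k)

lemma prod_gw (xs : Fin n → Fin 3 → Bool) :
    ∏ k, gw θ (xs k) = (1/2)^n * ∏ α, gpw θ α ^ cnt α xs := by
  rw [show (∏ k, gw θ (xs k)) = ∏ k, (1/2) * gpw θ (pat (xs k)) from rfl,
    Finset.prod_mul_distrib, Finset.prod_const, prod_pat]
  simp

lemma prod_gw_cls (v : Fin 4 → ℕ) (xs : Fin n → Fin 3 → Bool) (hxs : xs ∈ Cls n v) :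
    ∏ k, gw θ (xs k) = wval θ n v := by
  have hc : ∀ γ, cnt γ xs = v γ := (Finset.mem_filter.1 hxs).2
  rw [prod_gw, Fin.prod_univ_four, wval]
  rw [show gpw θ 0 = (1-θ)^2 from rfl, show gpw θ 1 = tv θ from rfl,
    show gpw θ 2 = tv θ from rfl, show gpw θ 3 = tv θ from rfl,
    hc 0, hc 1, hc 2, hc 3, pow_add, pow_add]
  ring

lemma Fw_eq (v : Fin 4 → ℕ) : Fw θ n v = (Cls n v).card * wval θ n v := by
  rw [Fw, Finset.sum_congr rfl (fun xs hxs => prod_gw_cls v xs hxs), Finset.sum_const,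
    nsmul_eq_mul]

end Weights


section Sums

variable {θ : ℝ} {n : ℕ}

def box (n : ℕ) : Finset (Fin 4 → ℕ) :=
  Finset.image (fun (xs : Fin n → Fin 3 → Bool) (γ : Fin 4) => cnt γ xs) univ

lemma Cls_eq_fiber (v : Fin 4 → ℕ) :
    Cls n v = univ.filter fun xs => (fun γ => cnt γ xs) = v := by
  apply Finset.filter_congr
  intro xs _
  rw [funext_iff]

lemma sum_gw_single (hθ1 : θ < 1/2) : ∑ x : Fin 3 → Bool, gw θ x = Mv θ := by
  have : ∀ α : Fin 4, (univ.filter fun x : Fin 3 → Bool => pat x = α).card = 2 := by decide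
  rw [← Finset.sum_fiberwise_of_maps_to (g := pat) (t := univ) (fun x _ => mem_univ _)
    (fun x => gw θ x)]
  rw [Fin.sum_univ_four]
  have e : ∀ α : Fin 4, ∑ x ∈ univ.filter fun x : Fin 3 → Bool => pat x = α, gw θ x
      = 2 * ((1/2) * gpw θ α) := by
    intro α
    rw [Finset.sum_congr rfl (fun x hx => by
      rw [show gw θ x = (1/2) * gpw θ (pat x) from rfl, (Finset.mem_filter.1 hx).2]),
      Finset.sum_const, this α, nsmul_eq_mul]
    norm_num
  rw [e 0, e 1, e 2, e 3, show gpw θ 0 = (1-θ)^2 from rfl, show gpw θ 1 = tv θ from rfl,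
    show gpw θ 2 = tv θ from rfl, show gpw θ 3 = tv θ from rfl, Mv]
  ring

lemma sum_all_gw (hθ1 : θ < 1/2) :
    ∑ xs : Fin n → Fin 3 → Bool, ∏ k, gw θ (xs k) = Mv θ ^ n := by
  have h := Finset.prod_univ_sum (κ := fun _ : Fin n => Fin 3 → Bool)
    (fun _ => (univ : Finset (Fin 3 → Bool))) (fun _ x => gw θ x)
  rw [Fintype.piFinset_univ] at h
  rw [← h, Finset.prod_const, Finset.card_univ, Fintype.card_fin, sum_gw_single hθ1]

lemma sum_box_Fw (hθ1 : θ < 1/2) : ∑ v ∈ box n, Fw θ n v = Mv θ ^ n := by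
  rw [← sum_all_gw (n := n) hθ1]
  calc ∑ v ∈ box n, Fw θ n v
      = ∑ v ∈ box n, ∑ xs ∈ univ.filter (fun xs : Fin n → Fin 3 → Bool =>
          (fun γ => cnt γ xs) = v), ∏ k, gw θ (xs k) :=
        Finset.sum_congr rfl fun v _ => by rw [Fw, Cls_eq_fiber]
    _ = ∑ xs : Fin n → Fin 3 → Bool, ∏ k, gw θ (xs k) :=
        Finset.sum_fiberwise_of_maps_to
          (fun xs _ => Finset.mem_image_of_mem _ (mem_univ xs)) _

end Sums


section Steps

variable {θ : ℝ} {n : ℕ}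

def sA : (Fin 3 → Bool) → (Fin 3 → Bool) := fun x => ![!x 0, x 1, x 2]
def sB : (Fin 3 → Bool) → (Fin 3 → Bool) := fun x => ![x 0, x 1, !x 2]
def sC : (Fin 3 → Bool) → (Fin 3 → Bool) := fun x => ![!x 0, x 1, !x 2]

lemma invA : ∀ x, sA (sA x) = x := by decide
lemma invB : ∀ x, sB (sB x) = x := by decide
lemma invC : ∀ x, sC (sC x) = x := by decide

lemma upd2_apply (v : Fin 4 → ℕ) (α β γ : Fin 4) (hne : α ≠ β) :
    upd2 v α β γ = if γ = β then v β + 1 else if γ = α then v α - 1 else v γ := by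
  by_cases h1 : γ = β
  · subst h1; rw [if_pos rfl, upd2, Function.update_self]
  · rw [if_neg h1, upd2, Function.update_of_ne h1]
    by_cases h2 : γ = α
    · subst h2; rw [if_pos rfl, Function.update_self]
    · rw [if_neg h2, Function.update_of_ne h2]

lemma mem_box_sum {v : Fin 4 → ℕ} (hv : v ∈ box (n := n)) : v 0 + v 1 + v 2 + v 3 = n := by
  obtain ⟨xs, -, rfl⟩ := Finset.mem_image.1 hv
  have := sum_cnt xs
  rw [Fin.sum_univ_four] at this
  exact this

lemma cls_nonempty_mem_box {v : Fin 4 → ℕ} (hv : (Cls n v).Nonempty) : v ∈ box (n := n) := by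
  obtain ⟨xs, hxs⟩ := hv
  have hc : ∀ γ, cnt γ xs = v γ := (Finset.mem_filter.1 hxs).2
  exact Finset.mem_image.2 ⟨xs, mem_univ _, funext hc⟩

-- balancing step: swap one sample of pattern α to pattern β (α, β ∈ {1,2,3})
lemma step_balance (σ : (Fin 3 → Bool) → (Fin 3 → Bool)) (hσ : ∀ x, σ (σ x) = x)
    (α β : Fin 4) (hα0 : α ≠ 0) (hβ0 : β ≠ 0) (hne : α ≠ β)
    (hp : ∀ x, pat x = α ↔ pat (σ x) = β)
    (v : Fin 4 → ℕ) (hvα : 1 ≤ v α) :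
    Fw θ n v * v α = Fw θ n (upd2 v α β) * (v β + 1) := by
  have hcard := swap_card (n := n) σ hσ α β hne hp v hvα
  have hwv : wval θ n (upd2 v α β) = wval θ n v := by
    have h0 : upd2 v α β 0 = v 0 := by
      rw [upd2_apply v α β 0 hne, if_neg (fun h => hβ0 h.symm), if_neg (fun h => hα0 h.symm)]
    have hsum : upd2 v α β 1 + upd2 v α β 2 + upd2 v α β 3 = v 1 + v 2 + v 3 := by
      rw [upd2_apply v α β 1 hne, upd2_apply v α β 2 hne, upd2_apply v α β 3 hne]
      fin_cases α <;> fin_cases β <;> simp_all <;> omega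
    rw [wval, wval, h0, hsum]
  rw [Fw_eq, Fw_eq, hwv]
  have hR : ((Cls n v).card : ℝ) * (v α : ℝ)
      = ((Cls n (upd2 v α β)).card : ℝ) * ((v β : ℝ) + 1) := by
    exact_mod_cast congrArg (Nat.cast : ℕ → ℝ) hcard
  push_cast
  calc ((Cls n v).card : ℝ) * wval θ n v * (v α : ℝ)
      = (((Cls n v).card : ℝ) * (v α : ℝ)) * wval θ n v := by ring
    _ = (((Cls n (upd2 v α β)).card : ℝ) * ((v β : ℝ) + 1)) * wval θ n v := by rw [hR]
    _ = ((Cls n (upd2 v α β)).card : ℝ) * wval θ n v * ((v β : ℝ) + 1) := by ring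

-- reduction step: swap one sample of pattern α (α ∈ {1,2,3}) to pattern 0
lemma step_reduce (hθ0 : 0 < θ) (hθ1 : θ < 1/2)
    (σ : (Fin 3 → Bool) → (Fin 3 → Bool)) (hσ : ∀ x, σ (σ x) = x)
    (α : Fin 4) (hα0 : α ≠ 0)
    (hp : ∀ x, pat x = α ↔ pat (σ x) = 0)
    (v : Fin 4 → ℕ) (hvα : 1 ≤ v α) (hv0 : v 0 ≤ n) :
    Fw θ n v * ((1-θ)^2 / (tv θ * (n+1))) ≤ Fw θ n (upd2 v α 0) := by
  have htv := tv_pos hθ0 hθ1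
  have hB2 : (0:ℝ) < (1-θ)^2 := by nlinarith
  have hcard := swap_card (n := n) σ hσ α 0 hα0 hp v hvα
  -- wval (upd2 v α 0) * tv θ = wval v * (1-θ)^2
  have hwv : wval θ n (upd2 v α 0) * tv θ = wval θ n v * (1-θ)^2 := by
    have h0 : upd2 v α 0 0 = v 0 + 1 := by rw [upd2_apply v α 0 0 hα0, if_pos rfl]
    have hsum : upd2 v α 0 1 + upd2 v α 0 2 + upd2 v α 0 3 + 1 = v 1 + v 2 + v 3 := by
      rw [upd2_apply v α 0 1 hα0, upd2_apply v α 0 2 hα0, upd2_apply v α 0 3 hα0]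
      fin_cases α <;> simp_all <;> omega
    rw [wval, wval, h0, ← hsum, pow_add, pow_succ (tv θ) (upd2 v α 0 1 + upd2 v α 0 2 + upd2 v α 0 3)]
    ring
  have hcardR : ((Cls n v).card : ℝ) * (v α : ℝ)
      = ((Cls n (upd2 v α 0)).card : ℝ) * ((v 0 : ℝ) + 1) := by
    exact_mod_cast congrArg (Nat.cast : ℕ → ℝ) hcard
  have hwnn : 0 ≤ wval θ n v := by
    rw [wval]
    exact mul_nonneg (mul_nonneg (by positivity) (by positivity)) (pow_nonneg htv.le _)
  have hw'nn : 0 ≤ wval θ n (upd2 v α 0) := by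
    rw [wval]
    exact mul_nonneg (mul_nonneg (by positivity) (by positivity)) (pow_nonneg htv.le _)
  have hcnn : (0:ℝ) ≤ ((Cls n v).card : ℝ) := Nat.cast_nonneg _
  have hc'nn : (0:ℝ) ≤ ((Cls n (upd2 v α 0)).card : ℝ) := Nat.cast_nonneg _
  have hvαR : (1:ℝ) ≤ (v α : ℝ) := by exact_mod_cast hvα
  have hv0R : ((v 0 : ℝ) + 1) ≤ (n:ℝ) + 1 := by
    have : ((v 0 : ℕ) : ℝ) ≤ (n : ℝ) := by exact_mod_cast hv0
    linarith
  rw [Fw_eq, Fw_eq, ← mul_div_assoc, div_le_iff₀ (by positivity)]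
  calc ((Cls n v).card : ℝ) * wval θ n v * (1-θ)^2
      ≤ ((Cls n v).card : ℝ) * wval θ n v * (1-θ)^2 * (v α : ℝ) :=
        le_mul_of_one_le_right (mul_nonneg (mul_nonneg hcnn hwnn) hB2.le) hvαR
    _ = (((Cls n v).card : ℝ) * (v α : ℝ)) * (wval θ n v * (1-θ)^2) := by ring
    _ = (((Cls n (upd2 v α 0)).card : ℝ) * ((v 0 : ℝ) + 1)) * (wval θ n v * (1-θ)^2) := by
        rw [hcardR]
    _ = (((Cls n (upd2 v α 0)).card : ℝ) * ((v 0 : ℝ) + 1))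
        * (wval θ n (upd2 v α 0) * tv θ) := by rw [hwv]
    _ = (((Cls n (upd2 v α 0)).card : ℝ) * wval θ n (upd2 v α 0))
        * (tv θ * ((v 0 : ℝ) + 1)) := by ring
    _ ≤ (((Cls n (upd2 v α 0)).card : ℝ) * wval θ n (upd2 v α 0))
        * (tv θ * ((n:ℝ) + 1)) := by
        apply mul_le_mul_of_nonneg_left _ (mul_nonneg hc'nn hw'nn)
        exact mul_le_mul_of_nonneg_left hv0R htv.le
    _ = ((Cls n (upd2 v α 0)).card : ℝ) * wval θ n (upd2 v α 0) * (tv θ * ((n:ℝ) + 1)) := by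
        ring

end Steps


section MaxArg

variable {θ : ℝ} {n : ℕ}

lemma p12 : ∀ x, pat x = 1 ↔ pat (sC x) = 2 := by decide
lemma p21 : ∀ x, pat x = 2 ↔ pat (sC x) = 1 := by decide
lemma p13 : ∀ x, pat x = 1 ↔ pat (sA x) = 3 := by decide
lemma p31 : ∀ x, pat x = 3 ↔ pat (sA x) = 1 := by decide
lemma p23 : ∀ x, pat x = 2 ↔ pat (sB x) = 3 := by decide
lemma p32 : ∀ x, pat x = 3 ↔ pat (sB x) = 2 := by decide
lemma p10 : ∀ x, pat x = 1 ↔ pat (sB x) = 0 := by decide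
lemma p20 : ∀ x, pat x = 2 ↔ pat (sA x) = 0 := by decide
lemma p30 : ∀ x, pat x = 3 ↔ pat (sC x) = 0 := by decide

lemma gw_nonneg (hθ0 : 0 < θ) (hθ1 : θ < 1/2) (x : Fin 3 → Bool) : 0 ≤ gw θ x := by
  have htv := (tv_pos hθ0 hθ1).le
  have hg : ∀ α : Fin 4, 0 ≤ gpw θ α := by
    intro α
    fin_cases α
    · show (0:ℝ) ≤ (1-θ)^2; positivity
    · exact htv
    · exact htv
    · exact htv
  have : 0 ≤ (1/2 : ℝ) * gpw θ (pat x) := mul_nonneg (by norm_num) (hg _)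
  exact this

lemma Fw_nonneg (hθ0 : 0 < θ) (hθ1 : θ < 1/2) (v : Fin 4 → ℕ) : 0 ≤ Fw θ n v :=
  Finset.sum_nonneg fun xs _ => Finset.prod_nonneg fun k _ => gw_nonneg hθ0 hθ1 (xs k)

lemma Mv_pos (hθ0 : 0 < θ) (hθ1 : θ < 1/2) : 0 < Mv θ := by
  have := tv_pos hθ0 hθ1
  have : (0:ℝ) < (1-θ)^2 := by nlinarith
  rw [Mv]
  nlinarith [tv_pos hθ0 hθ1]

lemma upd2_ne (v : Fin 4 → ℕ) (α γ : Fin 4) (hα0 : α ≠ 0) (hγ0 : γ ≠ 0) (hγα : γ ≠ α) :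
    upd2 v α 0 γ = v γ := by
  rw [upd2_apply v α 0 γ hα0, if_neg hγ0, if_neg hγα]

lemma upd2_at (v : Fin 4 → ℕ) (α : Fin 4) (hα0 : α ≠ 0) : upd2 v α 0 α = v α - 1 := by
  rw [upd2_apply v α 0 α hα0, if_neg hα0, if_pos rfl]

lemma upd2_zero (v : Fin 4 → ℕ) (α : Fin 4) (hα0 : α ≠ 0) : upd2 v α 0 0 = v 0 + 1 := by
  rw [upd2_apply v α 0 0 hα0, if_pos rfl]

lemma exists_diag (hθ0 : 0 < θ) (hθ1 : θ < 1/2) (n : ℕ)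
    (hρ1 : (1-θ)^2 / (tv θ * (n+1)) ≤ 1) :
    ∃ v : Fin 4 → ℕ, v 1 = v 2 ∧ v 2 = v 3 ∧
      Mv θ ^ n / ((n:ℝ)+1)^4 * ((1-θ)^2 / (tv θ * ((n:ℝ)+1)))^2 ≤ Fw θ n v := by
  classical
  set ρ : ℝ := (1-θ)^2 / (tv θ * ((n:ℝ)+1)) with hρdef
  have htv := tv_pos hθ0 hθ1
  have hρ0 : 0 ≤ ρ := by positivity
  have hbox_ne : (box (n := n)).Nonempty :=
    Finset.image_nonempty.2 Finset.univ_nonempty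
  obtain ⟨v, hvbox, hvmax⟩ := Finset.exists_max_image (box (n := n)) (Fw θ n) hbox_ne
  have hcardbox : ((box (n := n)).card : ℝ) ≤ ((n:ℝ)+1)^4 := by
    have hsub : box (n := n) ⊆ Fintype.piFinset (fun _ : Fin 4 => Finset.range (n+1)) := by
      intro w hw
      obtain ⟨xs, -, rfl⟩ := Finset.mem_image.1 hw
      rw [Fintype.mem_piFinset]
      intro γ
      rw [Finset.mem_range]
      have h1 : cnt γ xs ≤ ∑ δ, cnt δ xs :=
        Finset.single_le_sum (f := fun δ : Fin 4 => cnt δ xs) (fun δ _ => Nat.zero_le _) (mem_univ γ)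
      rw [sum_cnt] at h1
      omega
    have := Finset.card_le_card hsub
    calc ((box (n := n)).card : ℝ) ≤ ((Fintype.piFinset (fun _ : Fin 4 => Finset.range (n+1))).card : ℝ) := by exact_mod_cast this
      _ = ((n:ℝ)+1)^4 := by
          rw [Fintype.card_piFinset]
          push_cast [Finset.card_range]
          norm_num
  have havg : Mv θ ^ n / ((n:ℝ)+1)^4 ≤ Fw θ n v := by
    have hsum : ∑ w ∈ box (n := n), Fw θ n w = Mv θ ^ n := sum_box_Fw hθ1
    have hle : Mv θ ^ n ≤ ((box (n := n)).card : ℝ) * Fw θ n v := by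
      rw [← hsum]
      calc ∑ w ∈ box (n := n), Fw θ n w ≤ ∑ _w ∈ box (n := n), Fw θ n v :=
            Finset.sum_le_sum fun w hw => hvmax w hw
        _ = ((box (n := n)).card : ℝ) * Fw θ n v := by
            rw [Finset.sum_const, nsmul_eq_mul]
    rw [div_le_iff₀ (by positivity)]
    calc Mv θ ^ n ≤ ((box (n := n)).card : ℝ) * Fw θ n v := hle
      _ ≤ ((n:ℝ)+1)^4 * Fw θ n v := by
          apply mul_le_mul_of_nonneg_right hcardbox (Fw_nonneg hθ0 hθ1 v)
      _ = Fw θ n v * ((n:ℝ)+1)^4 := by ring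
  have hFpos : 0 < Fw θ n v := by
    have h1 : (0:ℝ) < Mv θ ^ n / ((n:ℝ)+1)^4 := by
      have := Mv_pos hθ0 hθ1
      positivity
    linarith
  -- pairwise balance
  have hbalance : ∀ (σ : (Fin 3 → Bool) → (Fin 3 → Bool)), (∀ x, σ (σ x) = x) →
      ∀ (α β : Fin 4), α ≠ 0 → β ≠ 0 → α ≠ β → (∀ x, pat x = α ↔ pat (σ x) = β) →
      v α ≤ v β + 1 := by
    intro σ hσ α β hα0 hβ0 hne hp
    by_contra hcon
    push_neg at hcon
    have hvα : 1 ≤ v α := by omega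
    have heq := step_balance (θ := θ) (n := n) σ hσ α β hα0 hβ0 hne hp v hvα
    have hvβpos : (0:ℝ) < (v α : ℝ) := by
      have : (1:ℕ) ≤ v α := hvα
      exact_mod_cast Nat.lt_of_lt_of_le Nat.zero_lt_one this
    have hF'pos : 0 < Fw θ n (upd2 v α β) := by
      have h1 : 0 < Fw θ n (upd2 v α β) * ((v β : ℝ) + 1) := by
        rw [← heq]
        exact mul_pos hFpos hvβpos
      nlinarith [h1]
    have hne' : (Cls n (upd2 v α β)).Nonempty := by
      by_contra hemp
      rw [Finset.not_nonempty_iff_eq_empty] at hemp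
      have : Fw θ n (upd2 v α β) = 0 := by rw [Fw, hemp, Finset.sum_empty]
      linarith
    have hmem := cls_nonempty_mem_box hne'
    have hle := hvmax _ hmem
    have : Fw θ n v * (v α : ℝ) ≤ Fw θ n v * ((v β : ℝ) + 1) := by
      rw [heq]
      exact mul_le_mul_of_nonneg_right hle (by positivity)
    have hcast : (v α : ℝ) ≤ (v β : ℝ) + 1 := le_of_mul_le_mul_left
      (by calc Fw θ n v * (v α:ℝ) ≤ Fw θ n v * ((v β:ℝ)+1) := this
            ) hFpos
    have : v α ≤ v β + 1 := by exact_mod_cast hcast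
    omega
  have h12 := hbalance sC invC 1 2 (by decide) (by decide) (by decide) p12
  have h21 := hbalance sC invC 2 1 (by decide) (by decide) (by decide) p21
  have h13 := hbalance sA invA 1 3 (by decide) (by decide) (by decide) p13
  have h31 := hbalance sA invA 3 1 (by decide) (by decide) (by decide) p31
  have h23 := hbalance sB invB 2 3 (by decide) (by decide) (by decide) p23
  have h32 := hbalance sB invB 3 2 (by decide) (by decide) (by decide) p32
  -- setup
  have hsumv := mem_box_sum hvbox
  set X : ℝ := Mv θ ^ n / ((n:ℝ)+1)^4 with hXdef
  have hX0 : 0 ≤ X := le_of_lt (by have := Mv_pos hθ0 hθ1; positivity)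
  set d : ℕ := min (min (v 1) (v 2)) (v 3) with hddef
  have hd1 : d ≤ v 1 := le_trans (min_le_left _ _) (min_le_left _ _)
  have hd2 : d ≤ v 2 := le_trans (min_le_left _ _) (min_le_right _ _)
  have hd3 : d ≤ v 3 := min_le_right _ _
  have hdat : d = v 1 ∨ d = v 2 ∨ d = v 3 := by
    rcases min_choice (min (v 1) (v 2)) (v 3) with h|h
    · rcases min_choice (v 1) (v 2) with h'|h'
      · left; rw [hddef, h, h']
      · right; left; rw [hddef, h, h']
    · right; right; rw [hddef, h]
  have hub1 : v 1 ≤ d + 1 := by omega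
  have hub2 : v 2 ≤ d + 1 := by omega
  have hub3 : v 3 ≤ d + 1 := by omega
  have hcond : ∀ (w : Fin 4 → ℕ) (γ : Fin 4), (γ = 1 ∨ γ = 2 ∨ γ = 3) → w 0 ≤ n →
      1 ≤ w γ → Fw θ n w * ρ ≤ Fw θ n (upd2 w γ 0) := by
    intro w γ hγ hw0 hw1
    rcases hγ with rfl|rfl|rfl
    · exact step_reduce hθ0 hθ1 sB invB 1 (by decide) p10 w hw1 hw0
    · exact step_reduce hθ0 hθ1 sA invA 2 (by decide) p20 w hw1 hw0
    · exact step_reduce hθ0 hθ1 sC invC 3 (by decide) p30 w hw1 hw0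
  have hv0n : v 0 ≤ n := by omega
  have hρ2 : ρ^2 ≤ 1 := by nlinarith
  -- one-step and two-step bounds
  have one_step : ∀ (γ : Fin 4), (γ = 1 ∨ γ = 2 ∨ γ = 3) → 1 ≤ v γ →
      X * ρ^2 ≤ Fw θ n (upd2 v γ 0) := by
    intro γ hγ h1
    have s1 := hcond v γ hγ hv0n h1
    have hF' : 0 ≤ Fw θ n v := Fw_nonneg hθ0 hθ1 v
    calc X * ρ^2 ≤ X * ρ := by
          nlinarith [mul_nonneg (mul_nonneg hX0 hρ0) (sub_nonneg.2 hρ1)]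
      _ ≤ Fw θ n v * ρ := mul_le_mul_of_nonneg_right havg hρ0
      _ ≤ Fw θ n (upd2 v γ 0) := s1
  have two_step : ∀ (γ δ : Fin 4), (γ = 1 ∨ γ = 2 ∨ γ = 3) → (δ = 1 ∨ δ = 2 ∨ δ = 3) →
      δ ≠ γ → 1 ≤ v γ → 1 ≤ v δ →
      X * ρ^2 ≤ Fw θ n (upd2 (upd2 v γ 0) δ 0) := by
    intro γ δ hγ hδ hne' h1 h2
    have hγ0 : γ ≠ (0 : Fin 4) := by rcases hγ with rfl|rfl|rfl <;> decide
    have hδ0 : δ ≠ (0 : Fin 4) := by rcases hδ with rfl|rfl|rfl <;> decide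
    have s1 := hcond v γ hγ hv0n h1
    have hw0' : (upd2 v γ 0) 0 ≤ n := by
      rw [upd2_zero v γ hγ0]
      rcases hγ with rfl|rfl|rfl <;> omega
    have hw1' : 1 ≤ (upd2 v γ 0) δ := by rw [upd2_ne v γ δ hγ0 hδ0 hne']; exact h2
    have s2 := hcond (upd2 v γ 0) δ hδ hw0' hw1'
    calc X * ρ^2 = (X * ρ) * ρ := by ring
      _ ≤ (Fw θ n v * ρ) * ρ :=
          mul_le_mul_of_nonneg_right (mul_le_mul_of_nonneg_right havg hρ0) hρ0
      _ ≤ Fw θ n (upd2 v γ 0) * ρ := mul_le_mul_of_nonneg_right s1 hρ0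
      _ ≤ Fw θ n (upd2 (upd2 v γ 0) δ 0) := s2
  by_cases q1 : v 1 = d <;> by_cases q2 : v 2 = d <;> by_cases q3 : v 3 = d
  · exact ⟨v, by omega, by omega, by nlinarith⟩
  · -- v 3 = d + 1
    refine ⟨upd2 v 3 0, ?_, ?_, one_step 3 (Or.inr (Or.inr rfl)) (by omega)⟩
    · rw [upd2_ne v 3 1 (by decide) (by decide) (by decide),
        upd2_ne v 3 2 (by decide) (by decide) (by decide)]
      omega
    · rw [upd2_ne v 3 2 (by decide) (by decide) (by decide),
        upd2_at v 3 (by decide)]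
      omega
  · -- v 2 = d + 1
    refine ⟨upd2 v 2 0, ?_, ?_, one_step 2 (Or.inr (Or.inl rfl)) (by omega)⟩
    · rw [upd2_ne v 2 1 (by decide) (by decide) (by decide),
        upd2_at v 2 (by decide)]
      omega
    · rw [upd2_at v 2 (by decide),
        upd2_ne v 2 3 (by decide) (by decide) (by decide)]
      omega
  · -- v 2 = v 3 = d + 1
    refine ⟨upd2 (upd2 v 2 0) 3 0, ?_, ?_,
      two_step 2 3 (Or.inr (Or.inl rfl)) (Or.inr (Or.inr rfl)) (by decide) (by omega) (by omega)⟩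
    · rw [upd2_ne _ 3 1 (by decide) (by decide) (by decide),
        upd2_ne _ 3 2 (by decide) (by decide) (by decide),
        upd2_ne v 2 1 (by decide) (by decide) (by decide),
        upd2_at v 2 (by decide)]
      omega
    · rw [upd2_ne _ 3 2 (by decide) (by decide) (by decide),
        upd2_at _ 3 (by decide), upd2_at v 2 (by decide),
        upd2_ne v 2 3 (by decide) (by decide) (by decide)]
      omega
  · -- v 1 = d + 1
    refine ⟨upd2 v 1 0, ?_, ?_, one_step 1 (Or.inl rfl) (by omega)⟩
    · rw [upd2_at v 1 (by decide),
        upd2_ne v 1 2 (by decide) (by decide) (by decide)]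
      omega
    · rw [upd2_ne v 1 2 (by decide) (by decide) (by decide),
        upd2_ne v 1 3 (by decide) (by decide) (by decide)]
      omega
  · -- v 1 = v 3 = d + 1
    refine ⟨upd2 (upd2 v 1 0) 3 0, ?_, ?_,
      two_step 1 3 (Or.inl rfl) (Or.inr (Or.inr rfl)) (by decide) (by omega) (by omega)⟩
    · rw [upd2_ne _ 3 1 (by decide) (by decide) (by decide),
        upd2_ne _ 3 2 (by decide) (by decide) (by decide),
        upd2_at v 1 (by decide),
        upd2_ne v 1 2 (by decide) (by decide) (by decide)]
      omega
    · rw [upd2_ne _ 3 2 (by decide) (by decide) (by decide),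
        upd2_at _ 3 (by decide),
        upd2_ne v 1 2 (by decide) (by decide) (by decide),
        upd2_ne v 1 3 (by decide) (by decide) (by decide)]
      omega
  · -- v 1 = v 2 = d + 1
    refine ⟨upd2 (upd2 v 1 0) 2 0, ?_, ?_,
      two_step 1 2 (Or.inl rfl) (Or.inr (Or.inl rfl)) (by decide) (by omega) (by omega)⟩
    · rw [upd2_ne _ 2 1 (by decide) (by decide) (by decide),
        upd2_at _ 2 (by decide), upd2_at v 1 (by decide),
        upd2_ne v 1 2 (by decide) (by decide) (by decide)]
      omega
    · rw [upd2_at _ 2 (by decide),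
        upd2_ne _ 2 3 (by decide) (by decide) (by decide),
        upd2_ne v 1 2 (by decide) (by decide) (by decide),
        upd2_ne v 1 3 (by decide) (by decide) (by decide)]
      omega
  · omega

end MaxArg


section Bounds

variable {θ : ℝ} {n : ℕ}

lemma prod_P (xs : Fin n → Fin 3 → Bool) :
    ∏ k, isingP θ chainA (xs k) = (1/2)^n * ∏ α, pw θ α ^ cnt α xs := by
  rw [Finset.prod_congr rfl (fun k _ => isingP_eq θ (xs k)), Finset.prod_mul_distrib,
    Finset.prod_const, prod_pat]
  simp

lemma cardA (xs : Fin n → Fin 3 → Bool) :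
    ((univ.filter fun k => xs k 0 = xs k 1).card = cnt 0 xs + cnt 1 xs)
    ∧ ((univ.filter fun k => xs k 1 = xs k 2).card = cnt 0 xs + cnt 2 xs)
    ∧ ((univ.filter fun k => xs k 0 = xs k 2).card = cnt 0 xs + cnt 3 xs) := by
  have hiff1 : ∀ x : Fin 3 → Bool, (x 0 = x 1) ↔ (pat x = 0 ∨ pat x = 1) := by decide
  have hiff2 : ∀ x : Fin 3 → Bool, (x 1 = x 2) ↔ (pat x = 0 ∨ pat x = 2) := by decide
  have hiff3 : ∀ x : Fin 3 → Bool, (x 0 = x 2) ↔ (pat x = 0 ∨ pat x = 3) := by decide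
  refine ⟨?_, ?_, ?_⟩
  · rw [show (univ.filter fun k => xs k 0 = xs k 1)
        = univ.filter fun k => (pat (xs k) = 0 ∨ pat (xs k) = 1) from
      Finset.filter_congr fun k _ => hiff1 (xs k), Finset.filter_or,
      Finset.card_union_of_disjoint (Finset.disjoint_filter.2
        fun k _ h0 h1 => by rw [h0] at h1; exact absurd h1 (by decide))]
    rfl
  · rw [show (univ.filter fun k => xs k 1 = xs k 2)
        = univ.filter fun k => (pat (xs k) = 0 ∨ pat (xs k) = 2) from
      Finset.filter_congr fun k _ => hiff2 (xs k), Finset.filter_or,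
      Finset.card_union_of_disjoint (Finset.disjoint_filter.2
        fun k _ h0 h1 => by rw [h0] at h1; exact absurd h1 (by decide))]
    rfl
  · rw [show (univ.filter fun k => xs k 0 = xs k 2)
        = univ.filter fun k => (pat (xs k) = 0 ∨ pat (xs k) = 3) from
      Finset.filter_congr fun k _ => hiff3 (xs k), Finset.filter_or,
      Finset.card_union_of_disjoint (Finset.disjoint_filter.2
        fun k _ h0 h1 => by rw [h0] at h1; exact absurd h1 (by decide))]
    rfl

lemma prod_P_le (hθ0 : 0 < θ) (hθ1 : θ < 1/2) (xs : Fin n → Fin 3 → Bool)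
    (h1 : cnt 1 xs ≤ cnt 3 xs) (h2 : cnt 2 xs ≤ cnt 3 xs) :
    ∏ k, isingP θ chainA (xs k) ≤ ∏ k, gw θ (xs k) := by
  rw [prod_P, prod_gw, Fin.prod_univ_four, Fin.prod_univ_four]
  rw [show pw θ 0 = (1-θ)^2 from rfl, show pw θ 1 = (1-θ)*θ from rfl,
    show pw θ 2 = (1-θ)*θ from rfl, show pw θ 3 = θ^2 from rfl,
    show gpw θ 0 = (1-θ)^2 from rfl, show gpw θ 1 = tv θ from rfl,
    show gpw θ 2 = tv θ from rfl, show gpw θ 3 = tv θ from rfl]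
  have hkey := key_pow hθ0 hθ1 (cnt 1 xs + cnt 2 xs) (cnt 3 xs) (by omega)
  rw [pow_add, pow_add, pow_add] at hkey
  have hfac : (0:ℝ) ≤ (1/2)^n * ((1-θ)^2)^(cnt 0 xs) := by positivity
  have h := mul_le_mul_of_nonneg_left hkey hfac
  calc (1/2)^n * (((1-θ)^2)^(cnt 0 xs) * ((1-θ)*θ)^(cnt 1 xs) * ((1-θ)*θ)^(cnt 2 xs)
        * (θ^2)^(cnt 3 xs))
      = ((1/2)^n * ((1-θ)^2)^(cnt 0 xs)) * (((1-θ)*θ)^(cnt 1 xs) * ((1-θ)*θ)^(cnt 2 xs)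
        * (θ^2)^(cnt 3 xs)) := by ring
    _ ≤ ((1/2)^n * ((1-θ)^2)^(cnt 0 xs)) * (tv θ^(cnt 1 xs) * tv θ^(cnt 2 xs)
        * tv θ^(cnt 3 xs)) := h
    _ = (1/2)^n * (((1-θ)^2)^(cnt 0 xs) * tv θ^(cnt 1 xs) * tv θ^(cnt 2 xs)
        * tv θ^(cnt 3 xs)) := by ring

end Bounds


section Probs

def Ev (n : ℕ) : Set (Fin n → Fin 3 → Bool) :=
  {xs | Ahat xs 0 1 ≤ Ahat xs 0 2 ∧ Ahat xs 1 2 ≤ Ahat xs 0 2}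

variable {θ : ℝ} {n : ℕ}

lemma prod_P_eq_diag (hθ0 : 0 < θ) (hθ1 : θ < 1/2) (xs : Fin n → Fin 3 → Bool)
    (h1 : cnt 1 xs = cnt 3 xs) (h2 : cnt 2 xs = cnt 3 xs) :
    ∏ k, isingP θ chainA (xs k) = ∏ k, gw θ (xs k) := by
  rw [prod_P, prod_gw, Fin.prod_univ_four, Fin.prod_univ_four]
  rw [show pw θ 0 = (1-θ)^2 from rfl, show pw θ 1 = (1-θ)*θ from rfl,
    show pw θ 2 = (1-θ)*θ from rfl, show pw θ 3 = θ^2 from rfl,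
    show gpw θ 0 = (1-θ)^2 from rfl, show gpw θ 1 = tv θ from rfl,
    show gpw θ 2 = tv θ from rfl, show gpw θ 3 = tv θ from rfl, h1, h2]
  have he : ((1-θ)*θ)^(cnt 3 xs) * ((1-θ)*θ)^(cnt 3 xs) * (θ^2)^(cnt 3 xs)
      = tv θ^(cnt 3 xs) * tv θ^(cnt 3 xs) * tv θ^(cnt 3 xs) := by
    have h3 : tv θ^(cnt 3 xs) * tv θ^(cnt 3 xs) * tv θ^(cnt 3 xs)
        = (tv θ^3)^(cnt 3 xs) := by
      rw [← pow_mul, Nat.mul_comm, pow_mul]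
      ring
    rw [h3, tv_cube hθ0 hθ1, ← mul_pow, ← mul_pow]
    congr 1
    ring
  calc (1/2)^n * (((1-θ)^2)^(cnt 0 xs) * ((1-θ)*θ)^(cnt 3 xs) * ((1-θ)*θ)^(cnt 3 xs)
        * (θ^2)^(cnt 3 xs))
      = (1/2)^n * ((1-θ)^2)^(cnt 0 xs)
        * (((1-θ)*θ)^(cnt 3 xs) * ((1-θ)*θ)^(cnt 3 xs) * (θ^2)^(cnt 3 xs)) := by ring
    _ = (1/2)^n * ((1-θ)^2)^(cnt 0 xs)
        * (tv θ^(cnt 3 xs) * tv θ^(cnt 3 xs) * tv θ^(cnt 3 xs)) := by rw [he]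
    _ = (1/2)^n * (((1-θ)^2)^(cnt 0 xs) * tv θ^(cnt 3 xs) * tv θ^(cnt 3 xs)
        * tv θ^(cnt 3 xs)) := by ring

lemma isingP_nonneg (hθ0 : 0 < θ) (hθ1 : θ < 1/2) (x : Fin 3 → Bool) :
    0 ≤ isingP θ chainA x := by
  rw [isingP_eq]
  have : ∀ α : Fin 4, 0 ≤ pw θ α := by
    intro α
    fin_cases α
    · show (0:ℝ) ≤ (1-θ)^2; positivity
    · show (0:ℝ) ≤ (1-θ)*θ; nlinarith
    · show (0:ℝ) ≤ (1-θ)*θ; nlinarith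
    · show (0:ℝ) ≤ θ^2; positivity
  exact mul_nonneg (by norm_num) (this _)

lemma iid_upper (hθ0 : 0 < θ) (hθ1 : θ < 1/2) (hn : 1 ≤ n) :
    iidProb (isingP θ chainA) n (Ev n) ≤ Mv θ ^ n := by
  rw [iidProb, ← sum_all_gw (n := n) hθ1]
  apply Finset.sum_le_sum
  intro xs _
  by_cases hxs : xs ∈ Ev n
  · rw [if_pos hxs]
    obtain ⟨hA1, hA2⟩ := hxs
    have hnpos : (0:ℝ) < n := by exact_mod_cast hn
    have hc1 : cnt 1 xs ≤ cnt 3 xs := by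
      have := (div_le_div_iff_of_pos_right hnpos).1 hA1
      have hcard : (univ.filter fun k => xs k 0 = xs k 1).card
          ≤ (univ.filter fun k => xs k 0 = xs k 2).card := by exact_mod_cast this
      have hA := cardA xs
      omega
    have hc2 : cnt 2 xs ≤ cnt 3 xs := by
      have := (div_le_div_iff_of_pos_right hnpos).1 hA2
      have hcard : (univ.filter fun k => xs k 1 = xs k 2).card
          ≤ (univ.filter fun k => xs k 0 = xs k 2).card := by exact_mod_cast this
      have hA := cardA xs
      omega
    exact prod_P_le hθ0 hθ1 xs hc1 hc2
  · rw [if_neg hxs]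
    exact Finset.prod_nonneg fun k _ => gw_nonneg hθ0 hθ1 (xs k)

lemma iid_lower (hθ0 : 0 < θ) (hθ1 : θ < 1/2) (v : Fin 4 → ℕ)
    (hd1 : v 1 = v 2) (hd2 : v 2 = v 3) :
    Fw θ n v ≤ iidProb (isingP θ chainA) n (Ev n) := by
  rw [iidProb, Fw]
  have hstep : ∀ xs ∈ Cls n v,
      ∏ k, gw θ (xs k) = if xs ∈ Ev n then ∏ k, isingP θ chainA (xs k) else 0 := by
    intro xs hxs
    have hc : ∀ γ, cnt γ xs = v γ := (Finset.mem_filter.1 hxs).2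
    have h1 : cnt 1 xs = cnt 3 xs := by rw [hc 1, hc 3, hd1, hd2]
    have h2 : cnt 2 xs = cnt 3 xs := by rw [hc 2, hc 3, hd2]
    have hA := cardA xs
    have hEv : xs ∈ Ev n := by
      have e1 : (univ.filter fun k => xs k 0 = xs k 1).card
          = (univ.filter fun k => xs k 0 = xs k 2).card := by omega
      have e2 : (univ.filter fun k => xs k 1 = xs k 2).card
          = (univ.filter fun k => xs k 0 = xs k 2).card := by omega
      exact ⟨le_of_eq (by rw [Ahat, Ahat, e1]), le_of_eq (by rw [Ahat, Ahat, e2])⟩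
    rw [if_pos hEv, prod_P_eq_diag hθ0 hθ1 xs h1 h2]
  rw [Finset.sum_congr rfl hstep]
  apply Finset.sum_le_sum_of_subset_of_nonneg (Finset.subset_univ _)
  intro xs _ _
  by_cases hxs : xs ∈ Ev n
  · rw [if_pos hxs]
    exact Finset.prod_nonneg fun k _ => isingP_nonneg hθ0 hθ1 (xs k)
  · rw [if_neg hxs]

end Probs


section Limit

variable {θ : ℝ}

lemma log_np1_div_n : Tendsto (fun n : ℕ => Real.log ((n:ℝ)+1) / n) atTop (nhds 0) := by
  have h1 : Tendsto (fun n : ℕ => Real.log ((n:ℝ)+1) / ((n:ℝ)+1)) atTop (nhds 0) :=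
    (Real.isLittleO_log_id_atTop.tendsto_div_nhds_zero).comp
      (tendsto_atTop_add_const_right atTop 1 tendsto_natCast_atTop_atTop)
  have h2 : Tendsto (fun n : ℕ => ((n:ℝ)+1)/n) atTop (nhds 1) := by
    have h3 : Tendsto (fun n : ℕ => 1 + 1/(n:ℝ)) atTop (nhds (1+0)) :=
      tendsto_const_nhds.add tendsto_one_div_atTop_nhds_zero_nat
    rw [add_zero] at h3
    apply h3.congr'
    filter_upwards [eventually_ge_atTop 1] with n hn
    have hn0 : (n:ℝ) ≠ 0 := by
      have : (0:ℝ) < n := by exact_mod_cast hn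
      linarith
    field_simp
  have h4 := h1.mul h2
  rw [mul_one] at h4
  apply h4.congr'
  filter_upwards [eventually_ge_atTop 1] with n hn
  have hn0 : (n:ℝ) ≠ 0 := by
    have : (0:ℝ) < n := by exact_mod_cast hn
    linarith
  have hn1 : ((n:ℝ)+1) ≠ 0 := by positivity
  field_simp

lemma main1 (hθ0 : 0 < θ) (hθ1 : θ < 1/2) :
    Tendsto (fun n : ℕ => -(1/(n:ℝ)) * Real.log (iidProb (isingP θ chainA) n (Ev n)))
      atTop (nhds (-Real.log (Mv θ))) := by
  have hM := Mv_pos hθ0 hθ1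
  have htv := tv_pos hθ0 hθ1
  have hB2 : (0:ℝ) < (1-θ)^2 := by nlinarith [hB0 hθ0 hθ1]
  set c : ℝ := 2*(Real.log (tv θ) - Real.log ((1-θ)^2)) with hc
  have hcdiv : Tendsto (fun n : ℕ => (6*Real.log ((n:ℝ)+1) + c)/n) atTop (nhds 0) := by
    have h6 : Tendsto (fun n : ℕ => 6*(Real.log ((n:ℝ)+1)/n)) atTop (nhds 0) := by
      have := log_np1_div_n.const_mul (6:ℝ)
      rwa [mul_zero] at this
    have hc' := tendsto_const_div_atTop_nhds_zero_nat c
    have := h6.add hc'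
    rw [add_zero] at this
    apply this.congr
    intro n
    rw [add_div]
    ring
  have htend : Tendsto (fun n : ℕ => -Real.log (Mv θ) + (6*Real.log ((n:ℝ)+1) + c)/n)
      atTop (nhds (-Real.log (Mv θ))) := by
    have := hcdiv.const_add (-Real.log (Mv θ))
    rwa [add_zero] at this
  have hevN : ∀ᶠ n : ℕ in atTop, 1 ≤ n ∧ (1-θ)^2 ≤ tv θ * ((n:ℝ)+1) := by
    have h1 : Tendsto (fun n : ℕ => tv θ * ((n:ℝ)+1)) atTop atTop := by
      apply Tendsto.const_mul_atTop htv
      exact tendsto_atTop_add_const_right atTop 1 tendsto_natCast_atTop_atTop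
    filter_upwards [eventually_ge_atTop 1, h1.eventually_ge_atTop ((1-θ)^2)] with n hn hn2
    exact ⟨hn, hn2⟩
  -- key per-n facts
  have hkey : ∀ n : ℕ, 1 ≤ n → (1-θ)^2 ≤ tv θ * ((n:ℝ)+1) →
      (-Real.log (Mv θ) ≤ -(1/(n:ℝ)) * Real.log (iidProb (isingP θ chainA) n (Ev n))
      ∧ -(1/(n:ℝ)) * Real.log (iidProb (isingP θ chainA) n (Ev n))
        ≤ -Real.log (Mv θ) + (6*Real.log ((n:ℝ)+1) + c)/n) := by
    intro n hn hρn
    have hnR : (0:ℝ) < n := by exact_mod_cast hn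
    have hnp1 : (0:ℝ) < (n:ℝ)+1 := by linarith
    set ρ : ℝ := (1-θ)^2/(tv θ * ((n:ℝ)+1)) with hρdef
    have hρpos : 0 < ρ := by positivity
    have hρ1 : ρ ≤ 1 := div_le_one_of_le₀ hρn (by positivity)
    obtain ⟨v, hv1, hv2, hvF⟩ := exists_diag hθ0 hθ1 n hρ1
    have hLB : Mv θ ^ n / ((n:ℝ)+1)^4 * ρ^2 ≤ iidProb (isingP θ chainA) n (Ev n) :=
      le_trans hvF (iid_lower hθ0 hθ1 v hv1 hv2)
    have hLBpos : 0 < Mv θ ^ n / ((n:ℝ)+1)^4 * ρ^2 := by positivity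
    have hPpos : 0 < iidProb (isingP θ chainA) n (Ev n) := lt_of_lt_of_le hLBpos hLB
    have hPle : iidProb (isingP θ chainA) n (Ev n) ≤ Mv θ ^ n := iid_upper hθ0 hθ1 hn
    constructor
    · have hlog : Real.log (iidProb (isingP θ chainA) n (Ev n)) ≤ (n:ℝ) * Real.log (Mv θ) := by
        rw [← Real.log_pow]
        exact Real.log_le_log hPpos hPle
      have h2 : (1/(n:ℝ)) * Real.log (iidProb (isingP θ chainA) n (Ev n)) ≤ Real.log (Mv θ) := by
        rw [show Real.log (Mv θ) = (1/(n:ℝ)) * ((n:ℝ) * Real.log (Mv θ)) by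
          field_simp]
        exact mul_le_mul_of_nonneg_left hlog (by positivity)
      linarith
    · have hlogLB : Real.log (Mv θ ^ n / ((n:ℝ)+1)^4 * ρ^2)
          = (n:ℝ) * Real.log (Mv θ) - 6*Real.log ((n:ℝ)+1) - c := by
        rw [Real.log_mul (by positivity) (by positivity),
          Real.log_div (by positivity) (by positivity), Real.log_pow, Real.log_pow,
          Real.log_pow, hρdef, Real.log_div (by positivity) (by positivity),
          Real.log_mul (by positivity) (by positivity), hc]
        push_cast
        ring
      have hlog2 : Real.log (Mv θ ^ n / ((n:ℝ)+1)^4 * ρ^2)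
          ≤ Real.log (iidProb (isingP θ chainA) n (Ev n)) :=
        Real.log_le_log hLBpos hLB
      rw [hlogLB] at hlog2
      have h3 : -(1/(n:ℝ)) * Real.log (iidProb (isingP θ chainA) n (Ev n))
          ≤ -(1/(n:ℝ)) * ((n:ℝ) * Real.log (Mv θ) - 6*Real.log ((n:ℝ)+1) - c) := by
        have := mul_le_mul_of_nonneg_left hlog2 (by positivity : (0:ℝ) ≤ 1/(n:ℝ))
        linarith
      calc -(1/(n:ℝ)) * Real.log (iidProb (isingP θ chainA) n (Ev n))
          ≤ -(1/(n:ℝ)) * ((n:ℝ) * Real.log (Mv θ) - 6*Real.log ((n:ℝ)+1) - c) := h3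
        _ = -Real.log (Mv θ) + (6*Real.log ((n:ℝ)+1) + c)/n := by
            field_simp
            ring
  apply tendsto_of_tendsto_of_tendsto_of_le_of_le' tendsto_const_nhds htend
  · filter_upwards [hevN] with n hn
    exact (hkey n hn.1 hn.2).1
  · filter_upwards [hevN] with n hn
    exact (hkey n hn.1 hn.2).2

end Limit


section Part2

variable {θ : ℝ}

lemma Mv_eq_target (hθ0 : 0 < θ) :
    1 - θ * (2 - θ - 3 * θ ^ ((1:ℝ)/3) * (1-θ) ^ ((2:ℝ)/3)) = Mv θ := by
  have h43 : θ ^ ((4:ℝ)/3) = θ * θ ^ ((1:ℝ)/3) := by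
    rw [show (4:ℝ)/3 = 1 + (1:ℝ)/3 by norm_num, Real.rpow_add hθ0, Real.rpow_one]
  rw [Mv, tv, h43]
  ring

lemma part2 (hθ0 : 0 < θ) (hθ1 : θ < 1/2) :
    Mv θ < 1 - θ * (1 - Real.sqrt (4*θ*(1-θ))) := by
  have hB := hB0 hθ0 hθ1
  set u : ℝ := (θ/(1-θ)) ^ ((1:ℝ)/6) with hu
  have hq0 : 0 < θ/(1-θ) := by positivity
  have hq1 : θ/(1-θ) < 1 := by
    rw [div_lt_one hB]
    linarith
  have hu0 : 0 < u := Real.rpow_pos_of_pos hq0 _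
  have hu1 : u < 1 := Real.rpow_lt_one hq0.le hq1 (by norm_num)
  -- u^2 = (θ/(1-θ))^(1/3), u^3 = (θ/(1-θ))^(1/2)
  have hu2 : u^2 = θ^((1:ℝ)/3) / (1-θ)^((1:ℝ)/3) := by
    rw [hu, ← Real.rpow_natCast ((θ/(1-θ)) ^ ((1:ℝ)/6)) 2, ← Real.rpow_mul hq0.le,
      show (1:ℝ)/6*(2:ℕ) = (1:ℝ)/3 by push_cast; norm_num,
      Real.div_rpow hθ0.le hB.le]
  have hu3 : u^3 = Real.sqrt θ / Real.sqrt (1-θ) := by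
    rw [hu, ← Real.rpow_natCast ((θ/(1-θ)) ^ ((1:ℝ)/6)) 3, ← Real.rpow_mul hq0.le,
      show (1:ℝ)/6*(3:ℕ) = (1:ℝ)/2 by push_cast; norm_num,
      Real.div_rpow hθ0.le hB.le, ← Real.sqrt_eq_rpow, ← Real.sqrt_eq_rpow]
  -- tv = θ(1-θ)u²
  have htveq : tv θ = θ * (1-θ) * u^2 := by
    rw [tv, hu2]
    have e1 : θ ^ ((4:ℝ)/3) = θ * θ ^ ((1:ℝ)/3) := by
      rw [show (4:ℝ)/3 = 1 + (1:ℝ)/3 by norm_num, Real.rpow_add hθ0, Real.rpow_one]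
    have e2 : (1-θ) ^ ((2:ℝ)/3) = (1-θ) / (1-θ) ^ ((1:ℝ)/3) := by
      rw [eq_div_iff (by positivity : (1-θ)^((1:ℝ)/3) ≠ 0), ← Real.rpow_add hB,
        show (2:ℝ)/3 + (1:ℝ)/3 = 1 by norm_num, Real.rpow_one]
    rw [e1, e2]
    field_simp
  -- √(4θ(1-θ)) = 2(1-θ)u³
  have hsq : Real.sqrt (4*θ*(1-θ)) = 2 * ((1-θ) * u^3) := by
    rw [hu3]
    rw [show 4*θ*(1-θ) = 4*(θ*(1-θ)) by ring, Real.sqrt_mul (by norm_num) _,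
      show Real.sqrt 4 = 2 by
        rw [show (4:ℝ) = 2^2 by norm_num, Real.sqrt_sq (by norm_num)],
      Real.sqrt_mul hθ0.le]
    have hms := Real.mul_self_sqrt hB.le
    have hs0 : Real.sqrt (1-θ) ≠ 0 := ne_of_gt (Real.sqrt_pos.2 hB)
    field_simp
    linear_combination hms
  have hcube : 3*u^2 < 1 + 2*u^3 := by
    nlinarith [mul_pos (mul_pos (sub_pos.2 hu1) (sub_pos.2 hu1))
      (show (0:ℝ) < 2*u+1 by linarith)]
  have hD : 0 < θ*(1-θ) := by positivity
  rw [Mv, htveq, hsq]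
  nlinarith [mul_pos hD (show (0:ℝ) < 1 + 2*u^3 - 3*u^2 by linarith)]

end Part2

end S12

end

/-- the exact exponent of the joint crossover event
`{Â_{1,3} ≥ Â_{1,2}} ∩ {Â_{1,3} ≥ Â_{2,3}}` for the 3-node chain, and the fact that
it is strictly larger than the dominant exponent `K(θ)`. -/
theorem stmt12 (θ : ℝ) (hθ0 : 0 < θ) (hθ1 : θ < 1 / 2) :
    Filter.Tendsto (fun n : ℕ =>
      -(1 / (n : ℝ)) * Real.log (iidProb (isingP θ chainA) n
        {xs | Ahat xs 0 1 ≤ Ahat xs 0 2 ∧ Ahat xs 1 2 ≤ Ahat xs 0 2}))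
      Filter.atTop
      (nhds (-Real.log (1 - θ *
        (2 - θ - 3 * θ ^ ((1 : ℝ) / 3) * (1 - θ) ^ ((2 : ℝ) / 3))))) ∧
    (-Real.log (1 - θ * (1 - Real.sqrt (4 * θ * (1 - θ)))))
      < -Real.log (1 - θ * (2 - θ - 3 * θ ^ ((1 : ℝ) / 3) * (1 - θ) ^ ((2 : ℝ) / 3))) := by
  have hθ1' : θ < 1/2 := hθ1
  have hMeq := S12.Mv_eq_target (θ := θ) hθ0
  constructor
  · have h := S12.main1 hθ0 hθ1'
    rw [← hMeq] at h
    exact h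
  · have hlt := S12.part2 hθ0 hθ1'
    have hMpos := S12.Mv_pos hθ0 hθ1'
    rw [hMeq]
    exact neg_lt_neg (Real.log_lt_log hMpos hlt)
end

section
/- Let θ ∈ (0, 1/2) and q ∈ [0, 1/2). Let U, V, W be the three homogeneous zero-field Ising distributions on {0,1}³ with edge sets {{1,2},{2,3}}, {{1,3},{2,3}}, {{1,2},{1,3}} respectively (i.e., U = P_{T,θ} for the corresponding tree, and similarly for V and W), and let U^{(q)}, V^{(q)}, W^{(q)} be their noisy versions: U^{(q)}(y) = ∑_{x∈{0,1}³} q^{δ(x,y)}·(1−q)^{3−δ(x,y)}·U(x), where δ(x,y) is the Hamming distance, and similarly for V^{(q)}, W^{(q)}. Then for any observed samples y_1,…,y_n ∈ {0,1}³: ∑_{k=1}^n log U^{(q)}(y_k) > ∑_{k=1}^n log V^{(q)}(y_k) if and only if Â_{1,2} > Â_{1,3}, and ∑_{k=1}^n log U^{(q)}(y_k) > ∑_{k=1}^n log W^{(q)}(y_k) if and only if Â_{2,3} > Â_{1,3}, where Â_{i,j} := (1/n)·#{k : y_{k,i} = y_{k,j}}. Consequently, the maximum-likelihood estimate of the edge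 set from the noisy samples is the maximum-weight spanning tree for the weights Â_{i,j}. -/
open scoped Classical BigOperators
open Filter

noncomputable section StmtAux

def E0' (θ q : ℝ) : ℝ := q * (1 - q) / 2 + θ ^ 2 / 2 * (1 - 2 * q) ^ 2
def E1' (θ q : ℝ) : ℝ := q * (1 - q) / 2 + θ * (1 - θ) / 2 * (1 - 2 * q) ^ 2
def E2' (θ q : ℝ) : ℝ := q * (1 - q) / 2 + (1 - θ) ^ 2 / 2 * (1 - 2 * q) ^ 2

def e3Aux : Bool × Bool × Bool ≃ (Fin 3 → Bool) where
  toFun p := ![p.1, p.2.1, p.2.2]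
  invFun x := (x 0, x 1, x 2)
  left_inv p := rfl
  right_inv x := by funext i; fin_cases i <;> rfl

lemma sum_bool3 (f : (Fin 3 → Bool) → ℝ) :
    ∑ x : Fin 3 → Bool, f x =
      f ![false, false, false] + f ![false, false, true] + f ![false, true, false] +
      f ![false, true, true] + f ![true, false, false] + f ![true, false, true] +
      f ![true, true, false] + f ![true, true, true] := by
  rw [← Equiv.sum_comp e3Aux f]
  simp only [Fintype.sum_prod_type, Fintype.sum_bool,
    show ∀ a b c, e3Aux (a, b, c) = ![a, b, c] from fun _ _ _ => rfl]
  ring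

lemma edgeA : chainA.edgeFinset = {s(0,1), s(1,2)} := by
  ext e
  induction e using Sym2.ind with
  | _ i j =>
    rw [SimpleGraph.mem_edgeFinset, chainA]
    fin_cases i <;> fin_cases j <;> simp <;> decide

lemma edgeB : chainB.edgeFinset = {s(0,2), s(1,2)} := by
  ext e
  induction e using Sym2.ind with
  | _ i j =>
    rw [SimpleGraph.mem_edgeFinset, chainB]
    fin_cases i <;> fin_cases j <;> simp <;> decide

lemma edgeC : chainC.edgeFinset = {s(0,1), s(0,2)} := by
  ext e
  induction e using Sym2.ind with
  | _ i j =>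
    rw [SimpleGraph.mem_edgeFinset, chainC]
    fin_cases i <;> fin_cases j <;> simp <;> decide

lemma isingA (θ : ℝ) (x : Fin 3 → Bool) : isingP θ chainA x =
    1 / 2 * ((if x 0 = x 1 then 1 - θ else θ) * (if x 1 = x 2 then 1 - θ else θ)) := by
  rw [isingP, edgeA, Finset.prod_insert (by decide), Finset.prod_singleton]
  simp [pairWeight]

lemma isingB (θ : ℝ) (x : Fin 3 → Bool) : isingP θ chainB x =
    1 / 2 * ((if x 0 = x 2 then 1 - θ else θ) * (if x 1 = x 2 then 1 - θ else θ)) := by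
  rw [isingP, edgeB, Finset.prod_insert (by decide), Finset.prod_singleton]
  simp [pairWeight]

lemma isingC (θ : ℝ) (x : Fin 3 → Bool) : isingP θ chainC x =
    1 / 2 * ((if x 0 = x 1 then 1 - θ else θ) * (if x 0 = x 2 then 1 - θ else θ)) := by
  rw [isingP, edgeC, Finset.prod_insert (by decide), Finset.prod_singleton]
  simp [pairWeight]

lemma hamming3 (x y : Fin 3 → Bool) : hamming x y =
    (if x 0 = y 0 then 0 else 1) + (if x 1 = y 1 then 0 else 1) +
      (if x 2 = y 2 then 0 else 1) := by
  rw [hamming, Finset.card_filter, Fin.sum_univ_three]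
  simp [ite_not]

lemma vec_cases (y : Fin 3 → Bool) : ∃ a b c, y = ![a, b, c] :=
  ⟨y 0, y 1, y 2, by funext i; fin_cases i <;> rfl⟩

lemma noisyA_eval (θ q : ℝ) (y : Fin 3 → Bool) :
    noisy q (isingP θ chainA) y =
      if y 0 = y 1 then (if y 1 = y 2 then E2' θ q else E1' θ q)
      else (if y 1 = y 2 then E1' θ q else E0' θ q) := by
  obtain ⟨a, b, c, rfl⟩ := vec_cases y
  rw [noisy, sum_bool3]
  cases a <;> cases b <;> cases c <;>
    · simp only [hamming3, isingA, Matrix.cons_val_zero, Matrix.cons_val_one,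
        Matrix.head_cons, Matrix.cons_val_two, Matrix.tail_cons, E0', E1', E2']
      norm_num
      ring

lemma noisyB_eval (θ q : ℝ) (y : Fin 3 → Bool) :
    noisy q (isingP θ chainB) y =
      if y 0 = y 2 then (if y 1 = y 2 then E2' θ q else E1' θ q)
      else (if y 1 = y 2 then E1' θ q else E0' θ q) := by
  obtain ⟨a, b, c, rfl⟩ := vec_cases y
  rw [noisy, sum_bool3]
  cases a <;> cases b <;> cases c <;>
    · simp only [hamming3, isingB, Matrix.cons_val_zero, Matrix.cons_val_one,
        Matrix.head_cons, Matrix.cons_val_two, Matrix.tail_cons, E0', E1', E2']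
      norm_num
      ring

lemma noisyC_eval (θ q : ℝ) (y : Fin 3 → Bool) :
    noisy q (isingP θ chainC) y =
      if y 0 = y 1 then (if y 0 = y 2 then E2' θ q else E1' θ q)
      else (if y 0 = y 2 then E1' θ q else E0' θ q) := by
  obtain ⟨a, b, c, rfl⟩ := vec_cases y
  rw [noisy, sum_bool3]
  cases a <;> cases b <;> cases c <;>
    · simp only [hamming3, isingC, Matrix.cons_val_zero, Matrix.cons_val_one,
        Matrix.head_cons, Matrix.cons_val_two, Matrix.tail_cons, E0', E1', E2']
      norm_num
      ring

lemma keyUV (θ q : ℝ) (y : Fin 3 → Bool) :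
    Real.log (noisy q (isingP θ chainA) y) - Real.log (noisy q (isingP θ chainB) y) =
      ((if y 0 = y 1 then (1:ℝ) else 0) - (if y 0 = y 2 then 1 else 0)) *
        (Real.log (E1' θ q) - Real.log (E0' θ q)) := by
  rw [noisyA_eval, noisyB_eval]
  by_cases h01 : y 0 = y 1 <;> by_cases h12 : y 1 = y 2
  · have h02 : y 0 = y 2 := h01.trans h12
    simp only [h01, h12, h02, if_pos rfl, if_true]
    ring
  · have h02 : ¬ (y 0 = y 2) := fun h => h12 (h01.symm.trans h)
    simp only [h01, h12, h02, if_true, if_false]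
    ring
  · have h02 : ¬ (y 0 = y 2) := fun h => h01 (h.trans h12.symm)
    simp only [h01, h12, h02, if_true, if_false]
    ring
  · have h02 : y 0 = y 2 := by
      revert h01 h12; cases hy0 : y 0 <;> cases hy1 : y 1 <;> cases hy2 : y 2 <;> simp
    have h21 : ¬ (y 2 = y 1) := fun h => h01 (h02.trans h)
    simp only [h01, h12, h02, h21, if_true, if_false]
    ring
  
lemma keyUW (θ q : ℝ) (y : Fin 3 → Bool) :
    Real.log (noisy q (isingP θ chainA) y) - Real.log (noisy q (isingP θ chainC) y) =
      ((if y 1 = y 2 then (1:ℝ) else 0) - (if y 0 = y 2 then 1 else 0)) *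
        (Real.log (E1' θ q) - Real.log (E0' θ q)) := by
  rw [noisyA_eval, noisyC_eval]
  by_cases h01 : y 0 = y 1 <;> by_cases h12 : y 1 = y 2
  · have h02 : y 0 = y 2 := h01.trans h12
    simp only [h01, h12, h02, if_pos rfl, if_true]
    ring
  · have h02 : ¬ (y 0 = y 2) := fun h => h12 (h01.symm.trans h)
    simp only [h01, h12, h02, if_true, if_false]
    ring
  · have h02 : ¬ (y 0 = y 2) := fun h => h01 (h.trans h12.symm)
    simp only [h01, h12, h02, if_true, if_false]
    ring
  · have h02 : y 0 = y 2 := by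
      revert h01 h12; cases hy0 : y 0 <;> cases hy1 : y 1 <;> cases hy2 : y 2 <;> simp
    have h21 : ¬ (y 2 = y 1) := fun h => h01 (h02.trans h)
    simp only [h01, h12, h02, h21, if_true, if_false]
    ring

lemma E0'_pos {θ q : ℝ} (hθ0 : 0 < θ) (hθ1 : θ < 1 / 2) (hq0 : 0 ≤ q) (hq1 : q < 1 / 2) :
    0 < E0' θ q := by
  have h1 : 0 < θ ^ 2 / 2 * (1 - 2 * q) ^ 2 := by
    have : 0 < 1 - 2 * q := by linarith
    positivity
  have h2 : 0 ≤ q * (1 - q) / 2 := by nlinarith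
  rw [E0']; linarith

lemma E0'_lt_E1' {θ q : ℝ} (hθ0 : 0 < θ) (hθ1 : θ < 1 / 2) (hq0 : 0 ≤ q) (hq1 : q < 1 / 2) :
    E0' θ q < E1' θ q := by
  have h1 : 0 < θ * (1 - θ) - θ ^ 2 := by nlinarith
  have h2 : 0 < 1 - 2 * q := by linarith
  have h : 0 < (θ * (1 - θ) - θ ^ 2) / 2 * (1 - 2 * q) ^ 2 := by positivity
  rw [E0', E1']; nlinarith

lemma sum_log_lt_iff (θ q : ℝ) (hθ0 : 0 < θ) (hθ1 : θ < 1 / 2) (hq0 : 0 ≤ q)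
    (hq1 : q < 1 / 2) (n : ℕ) (hn : 0 < n) (y : Fin n → Fin 3 → Bool)
    (G : SimpleGraph (Fin 3)) (i j i' j' : Fin 3)
    (hkey : ∀ z : Fin 3 → Bool,
      Real.log (noisy q (isingP θ chainA) z) - Real.log (noisy q (isingP θ G) z) =
        ((if z i = z j then (1:ℝ) else 0) - (if z i' = z j' then 1 else 0)) *
          (Real.log (E1' θ q) - Real.log (E0' θ q))) :
    ((∑ k, Real.log (noisy q (isingP θ G) (y k))
        < ∑ k, Real.log (noisy q (isingP θ chainA) (y k))) ↔
      Ahat y i' j' < Ahat y i j) := by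
  have hL : 0 < Real.log (E1' θ q) - Real.log (E0' θ q) :=
    sub_pos.2 (Real.log_lt_log (E0'_pos hθ0 hθ1 hq0 hq1) (E0'_lt_E1' hθ0 hθ1 hq0 hq1))
  have hsum : ∑ k, Real.log (noisy q (isingP θ chainA) (y k))
      - ∑ k, Real.log (noisy q (isingP θ G) (y k))
      = (((Finset.univ.filter (fun k : Fin n => y k i = y k j)).card : ℝ)
          - ((Finset.univ.filter (fun k : Fin n => y k i' = y k j')).card : ℝ)) *
        (Real.log (E1' θ q) - Real.log (E0' θ q)) := by
    rw [← Finset.sum_sub_distrib]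
    calc ∑ k, (Real.log (noisy q (isingP θ chainA) (y k))
            - Real.log (noisy q (isingP θ G) (y k)))
        = ∑ k, ((if y k i = y k j then (1:ℝ) else 0) - (if y k i' = y k j' then 1 else 0)) *
            (Real.log (E1' θ q) - Real.log (E0' θ q)) :=
          Finset.sum_congr rfl fun k _ => hkey (y k)
      _ = _ := by
          rw [← Finset.sum_mul]
          congr 1
          rw [Finset.sum_sub_distrib, Finset.sum_boole, Finset.sum_boole]
  have hn' : (0:ℝ) < (n:ℝ) := by exact_mod_cast hn
  rw [Ahat, Ahat, div_lt_div_iff_of_pos_right hn']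
  constructor
  · intro h
    have h2 : 0 < ∑ k, Real.log (noisy q (isingP θ chainA) (y k))
        - ∑ k, Real.log (noisy q (isingP θ G) (y k)) := by linarith
    rw [hsum] at h2
    nlinarith
  · intro h
    have h3 : (0:ℝ) < (((Finset.univ.filter (fun k : Fin n => y k i = y k j)).card : ℝ)
        - ((Finset.univ.filter (fun k : Fin n => y k i' = y k j')).card : ℝ)) := by
      linarith
    nlinarith [hsum]

end StmtAux


/-- with noisy samples, the pairwise log-likelihood comparisons between
the three candidate 3-node trees reduce to comparisons of empirical agreement weights;
consequently the ML tree is the maximum-weight spanning tree for the weights `Â`. -/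
theorem stmt16 (θ q : ℝ) (hθ0 : 0 < θ) (hθ1 : θ < 1 / 2) (hq0 : 0 ≤ q) (hq1 : q < 1 / 2)
    (n : ℕ) (y : Fin n → Fin 3 → Bool) :
    ((∑ k, Real.log (noisy q (isingP θ chainB) (y k))
        < ∑ k, Real.log (noisy q (isingP θ chainA) (y k))) ↔
      Ahat y 0 2 < Ahat y 0 1) ∧
    ((∑ k, Real.log (noisy q (isingP θ chainC) (y k))
        < ∑ k, Real.log (noisy q (isingP θ chainA) (y k))) ↔
      Ahat y 0 2 < Ahat y 1 2) ∧
    ((Ahat y 0 2 < Ahat y 0 1 ∧ Ahat y 0 2 < Ahat y 1 2) ↔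
      (∑ k, Real.log (noisy q (isingP θ chainB) (y k))
          < ∑ k, Real.log (noisy q (isingP θ chainA) (y k)) ∧
       ∑ k, Real.log (noisy q (isingP θ chainC) (y k))
          < ∑ k, Real.log (noisy q (isingP θ chainA) (y k)))) := by
  rcases Nat.eq_zero_or_pos n with hn | hn
  · subst hn
    have hA : ∀ (i j : Fin 3), Ahat y i j = 0 := by
      intro i j; simp [Ahat]
    simp [Finset.univ_eq_empty, hA]
  · have h1 := sum_log_lt_iff θ q hθ0 hθ1 hq0 hq1 n hn y chainB 0 1 0 2 (keyUV θ q)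
    have h2 := sum_log_lt_iff θ q hθ0 hθ1 hq0 hq1 n hn y chainC 1 2 0 2 (keyUW θ q)
    exact ⟨h1, h2, and_congr h1.symm h2.symm⟩
end

section
/- Let θ ∈ (0, 1/2) and q ∈ [0, 1/2). Let P = P_{T,θ} on {0,1}³ for the tree T with edge set {{1,2},{2,3}}, and let P^{(q)}(y) = ∑_{x∈{0,1}³} q^{δ(x,y)}·(1−q)^{3−δ(x,y)}·P(x), where δ(x,y) is the Hamming distance. Let y_1,…,y_n be i.i.d. samples from P^{(q)} and set Â^{(q)}_{i,j} := (1/n)·#{k : y_{k,i} = y_{k,j}}. Define β₁ := ((1−q)³+q³)·θ(1−θ)/2 + q(1−q)·(1−θ(1−θ))/2 and β₂ := ((1−q)³+q³)·θ²/2 + q(1−q)·(1−θ²)/2. Then lim_{n→∞} −(1/n)·log ℙ(Â^{(q)}_{1,3} ≥ Â^{(q)}_{1,2}) = −log(1 − 4·((β₁+β₂)/2 − √(β₁β₂))). In particular, at q = 0 this equals −log(1 − θ·(1 − √(4θ(1−θ)))). -/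
open scoped Classical BigOperators
open Filter

namespace Stmt17Aux

open Finset

/-! ### Model computation -/

lemma edgeA : chainA.edgeFinset = {s((0:Fin 3),(1:Fin 3)), s((1:Fin 3),(2:Fin 3))} := by
  ext e
  rw [SimpleGraph.mem_edgeFinset]
  induction e using Sym2.ind with
  | _ i j =>
    simp [SimpleGraph.mem_edgeFinset, chainA, SimpleGraph.fromEdgeSet, Sym2.eq_iff]
    fin_cases i <;> fin_cases j <;> decide

lemma isingA (θ : ℝ) (x : Fin 3 → Bool) :
    isingP θ chainA x
      = (1/2) * (if x 0 = x 1 then 1-θ else θ) * (if x 1 = x 2 then 1-θ else θ) := by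
  rw [isingP, edgeA, Finset.prod_insert (by decide), Finset.prod_singleton]
  simp [pairWeight]; ring

lemma sumBool3 (f : (Fin 3 → Bool) → ℝ) : ∑ x : Fin 3 → Bool, f x =
    f ![false,false,false] + f ![false,false,true] + f ![false,true,false] + f ![false,true,true]
    + f ![true,false,false] + f ![true,false,true] + f ![true,true,false] + f ![true,true,true] := by
  have h : (Finset.univ : Finset (Fin 3 → Bool)) =
      {![false,false,false], ![false,false,true], ![false,true,false], ![false,true,true],
       ![true,false,false], ![true,false,true], ![true,true,false], ![true,true,true]} := by
    decide
  rw [h]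
  repeat rw [Finset.sum_insert (by decide)]
  rw [Finset.sum_singleton]
  ring

lemma hamming3 (x y : Fin 3 → Bool) : hamming x y =
    (if x 0 = y 0 then 0 else 1) + (if x 1 = y 1 then 0 else 1) + (if x 2 = y 2 then 0 else 1) := by
  revert x y; decide

/-- The per-sample classifier: 0 = agree(0,1) only, 1 = agree(0,2) only, 2 = rest. -/
def cls (y : Fin 3 → Bool) : Fin 3 :=
  if y 0 = y 1 then (if y 0 = y 2 then 2 else 0) else (if y 0 = y 2 then 1 else 2)

def mass (ν : (Fin 3 → Bool) → ℝ) (j : Fin 3) : ℝ :=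
  ∑ y ∈ Finset.univ.filter (fun y => cls y = j), ν y

lemma mass_eq_if (ν : (Fin 3 → Bool) → ℝ) (j : Fin 3) :
    mass ν j = ∑ y : Fin 3 → Bool, if cls y = j then ν y else 0 := by
  rw [mass, Finset.sum_filter]

lemma mass0 (θ q : ℝ) :
    mass (noisy q (isingP θ chainA)) 0 = 2 * beta1 θ q := by
  rw [mass_eq_if]
  simp only [noisy, isingA, cls]
  rw [sumBool3]
  simp only [sumBool3, hamming3]
  norm_num [beta1, Fin.ext_iff, Matrix.cons_val_two, Matrix.tail_cons, Matrix.head_cons]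
  ring

lemma mass1 (θ q : ℝ) :
    mass (noisy q (isingP θ chainA)) 1 = 2 * beta2 θ q := by
  rw [mass_eq_if]
  simp only [noisy, isingA, cls]
  rw [sumBool3]
  simp only [sumBool3, hamming3]
  norm_num [beta2, Fin.ext_iff, Matrix.cons_val_two, Matrix.tail_cons, Matrix.head_cons]
  ring

lemma mass2 (θ q : ℝ) :
    mass (noisy q (isingP θ chainA)) 2 = 1 - 2 * beta1 θ q - 2 * beta2 θ q := by
  rw [mass_eq_if]
  simp only [noisy, isingA, cls]
  rw [sumBool3]
  simp only [sumBool3, hamming3]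
  norm_num [beta1, beta2, Fin.ext_iff, Matrix.cons_val_two, Matrix.tail_cons, Matrix.head_cons]
  ring

lemma noisy_nonneg (θ q : ℝ) (hθ0 : 0 ≤ θ) (hθ1 : θ ≤ 1) (hq0 : 0 ≤ q) (hq1 : q ≤ 1)
    (y : Fin 3 → Bool) : 0 ≤ noisy q (isingP θ chainA) y := by
  rw [noisy]
  apply Finset.sum_nonneg
  intro x _
  have h1 : 0 ≤ isingP θ chainA x := by
    rw [isingA]
    have : (0:ℝ) ≤ (if x 0 = x 1 then 1-θ else θ) := by split <;> linarith
    have : (0:ℝ) ≤ (if x 1 = x 2 then 1-θ else θ) := by split <;> linarith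
    positivity
  have h2 : (0:ℝ) ≤ 1 - q := by linarith
  positivity

/-! ### Pushforward to class counts -/

lemma fiber_prod (ν : (Fin 3 → Bool) → ℝ) {n : ℕ} (c : Fin n → Fin 3) :
    ∑ xs ∈ Finset.univ.filter (fun xs : Fin n → Fin 3 → Bool => cls ∘ xs = c),
      ∏ k, ν (xs k) = ∏ k, mass ν (c k) := by
  have h1 : ∀ k : Fin n, mass ν (c k)
      = ∑ y ∈ Finset.univ.filter (fun y => cls y = c k), ν y := fun k => rfl
  calc ∑ xs ∈ Finset.univ.filter (fun xs : Fin n → Fin 3 → Bool => cls ∘ xs = c),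
        ∏ k, ν (xs k)
      = ∑ xs ∈ Fintype.piFinset (fun k => Finset.univ.filter (fun y => cls y = c k)),
        ∏ k, ν (xs k) := by
        apply Finset.sum_congr _ (fun _ _ => rfl)
        ext xs
        simp [Fintype.mem_piFinset, funext_iff, Function.comp]
    _ = ∏ k, mass ν (c k) := by
        rw [← Finset.prod_univ_sum]
        exact Finset.prod_congr rfl (fun k _ => (h1 k).symm)

lemma pushforward (ν : (Fin 3 → Bool) → ℝ) {n : ℕ} (F : (Fin n → Fin 3) → Prop) :
    (∑ xs : Fin n → Fin 3 → Bool, if F (cls ∘ xs) then ∏ k, ν (xs k) else 0)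
      = ∑ c : Fin n → Fin 3, if F c then ∏ k, mass ν (c k) else 0 := by
  rw [← Finset.sum_fiberwise Finset.univ (fun xs : Fin n → Fin 3 → Bool => cls ∘ xs)
    (fun xs => if F (cls ∘ xs) then ∏ k, ν (xs k) else 0)]
  apply Finset.sum_congr rfl
  intro c _
  by_cases hF : F c
  · rw [if_pos hF, ← fiber_prod ν c]
    apply Finset.sum_congr rfl
    intro xs hxs
    rw [Finset.mem_filter] at hxs
    rw [hxs.2, if_pos hF]
  · rw [if_neg hF]
    apply Finset.sum_eq_zero
    intro xs hxs
    rw [Finset.mem_filter] at hxs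
    rw [hxs.2, if_neg hF]

/-! ### Event as class counts -/

lemma card_split {n : ℕ} (P Q : Fin n → Prop) :
    (Finset.univ.filter P).card
      = (Finset.univ.filter (fun k => P k ∧ Q k)).card
        + (Finset.univ.filter (fun k => P k ∧ ¬ Q k)).card := by
  rw [← Finset.filter_filter, ← Finset.filter_filter]
  exact (Finset.card_filter_add_card_filter_not (s := Finset.univ.filter P) Q).symm

lemma cls_eq_zero (y : Fin 3 → Bool) : cls y = 0 ↔ (y 0 = y 1 ∧ ¬ y 0 = y 2) := by
  unfold cls
  split_ifs with h1 h2 h3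
  · exact iff_of_false (by decide) (by tauto)
  · exact iff_of_true rfl ⟨h1, h2⟩
  · exact iff_of_false (by decide) (by tauto)
  · exact iff_of_false (by decide) (by tauto)

lemma cls_eq_one (y : Fin 3 → Bool) : cls y = 1 ↔ (¬ y 0 = y 1 ∧ y 0 = y 2) := by
  unfold cls
  split_ifs with h1 h2 h3
  · exact iff_of_false (by decide) (by tauto)
  · exact iff_of_false (by decide) (by tauto)
  · exact iff_of_true rfl ⟨h1, h3⟩
  · exact iff_of_false (by decide) (by tauto)

lemma event_eq {n : ℕ} (hn : 0 < n) (xs : Fin n → Fin 3 → Bool) :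
    (Ahat xs 0 1 ≤ Ahat xs 0 2) ↔
      ((Finset.univ.filter (fun k => cls (xs k) = 0)).card
        ≤ (Finset.univ.filter (fun k => cls (xs k) = 1)).card) := by
  have hn' : (0:ℝ) < n := by exact_mod_cast hn
  rw [Ahat, Ahat, div_le_div_iff_of_pos_right hn', Nat.cast_le]
  have h01 : (univ.filter (fun k => xs k 0 = xs k 1)).card
      = (univ.filter (fun k => (xs k 0 = xs k 1) ∧ (xs k 0 = xs k 2))).card
        + (univ.filter (fun k => (xs k 0 = xs k 1) ∧ ¬(xs k 0 = xs k 2))).card := by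
    rw [← Finset.filter_filter, ← Finset.filter_filter]
    exact (Finset.card_filter_add_card_filter_not
      (s := univ.filter (fun k => xs k 0 = xs k 1)) (fun k => xs k 0 = xs k 2)).symm
  have h02 : (univ.filter (fun k => xs k 0 = xs k 2)).card
      = (univ.filter (fun k => (xs k 0 = xs k 2) ∧ (xs k 0 = xs k 1))).card
        + (univ.filter (fun k => (xs k 0 = xs k 2) ∧ ¬(xs k 0 = xs k 1))).card := by
    rw [← Finset.filter_filter, ← Finset.filter_filter]
    exact (Finset.card_filter_add_card_filter_not
      (s := univ.filter (fun k => xs k 0 = xs k 2)) (fun k => xs k 0 = xs k 1)).symm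
  have e2 : (univ.filter (fun k => (xs k 0 = xs k 2) ∧ (xs k 0 = xs k 1))).card
      = (univ.filter (fun k => (xs k 0 = xs k 1) ∧ (xs k 0 = xs k 2))).card := by
    congr 1; apply Finset.filter_congr; intro k _; exact and_comm
  have e0 : (Finset.univ.filter (fun k => cls (xs k) = 0)).card
      = (univ.filter (fun k => (xs k 0 = xs k 1) ∧ ¬(xs k 0 = xs k 2))).card := by
    congr 1; apply Finset.filter_congr; intro k _; rw [cls_eq_zero]
  have e1 : (Finset.univ.filter (fun k => cls (xs k) = 1)).card
      = (univ.filter (fun k => (xs k 0 = xs k 2) ∧ ¬(xs k 0 = xs k 1))).card := by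
    congr 1; apply Finset.filter_congr; intro k _; rw [cls_eq_one]; tauto
  rw [e0, e1]
  omega

lemma sum_ite_congr {ι : Type*} [Fintype ι] (P Q : ι → Prop) [∀ i, Decidable (P i)]
    [∀ i, Decidable (Q i)] (f : ι → ℝ) (h : ∀ i, P i ↔ Q i) :
    (∑ i, if P i then f i else 0) = ∑ i, if Q i then f i else 0 := by
  apply Finset.sum_congr rfl; intro i _
  congr 1
  exact propext (h i)

lemma sum_ite_congr' {ι : Type*} [Fintype ι] {P Q : ι → Prop} (dP : ∀ i, Decidable (P i))
    (dQ : ∀ i, Decidable (Q i)) (f : ι → ℝ) (h : ∀ i, P i ↔ Q i) :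
    (∑ i, @ite _ (P i) (dP i) (f i) 0) = ∑ i, @ite _ (Q i) (dQ i) (f i) 0 := by
  apply Finset.sum_congr rfl; intro i _
  congr 1
  exact propext (h i)

/-- The main quantity: probability in terms of class vectors. -/
noncomputable def SQ (m : Fin 3 → ℝ) (n : ℕ) : ℝ :=
  ∑ c : Fin n → Fin 3,
    if (Finset.univ.filter (fun k => c k = 0)).card
        ≤ (Finset.univ.filter (fun k => c k = 1)).card
    then ∏ k, m (c k) else 0

/-- Reduction of the crossover probability to a sum over class vectors. -/
lemma prob_eq (θ q : ℝ) {n : ℕ} (hn : 0 < n) :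
    iidProb (noisy q (isingP θ chainA)) n {ys | Ahat ys 0 1 ≤ Ahat ys 0 2}
      = SQ (mass (noisy q (isingP θ chainA))) n := by
  set ν := noisy q (isingP θ chainA) with hν
  set F : (Fin n → Fin 3) → Prop := fun c =>
    (Finset.univ.filter (fun k => c k = 0)).card
      ≤ (Finset.univ.filter (fun k => c k = 1)).card with hF
  rw [iidProb, SQ]
  calc (∑ xs : Fin n → Fin 3 → Bool,
          if xs ∈ {ys | Ahat ys 0 1 ≤ Ahat ys 0 2} then ∏ k, ν (xs k) else 0)
      = ∑ xs : Fin n → Fin 3 → Bool, if F (cls ∘ xs) then ∏ k, ν (xs k) else 0 := by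
        apply sum_ite_congr
        intro xs
        show Ahat xs 0 1 ≤ Ahat xs 0 2 ↔ _
        rw [event_eq hn xs]
        exact Iff.rfl
    _ = ∑ c : Fin n → Fin 3, if F c then ∏ k, mass ν (c k) else 0 := by
        refine Eq.trans ?_ ((pushforward ν F).trans ?_)
        · exact sum_ite_congr' _ _ _ (fun xs => Iff.rfl)
        · exact sum_ite_congr' _ _ _ (fun c => Iff.rfl)
    _ = _ := by
        apply sum_ite_congr
        intro c
        exact Iff.rfl

/-! ### Chernoff upper bound -/

lemma fin3_cases (j : Fin 3) (h0 : j ≠ 0) (h1 : j ≠ 1) : j = 2 := by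
  fin_cases j <;> simp_all

lemma SQ_le (m : Fin 3 → ℝ) (hm : ∀ j, 0 ≤ m j) (t : ℝ) (ht : 1 ≤ t) (n : ℕ) :
    SQ m n ≤ (m 0 * t⁻¹ + m 1 * t + m 2) ^ n := by
  have ht0 : 0 < t := lt_of_lt_of_le one_pos ht
  set w : Fin 3 → ℝ := ![t⁻¹, t, 1] with hw
  have hwnn : ∀ j, 0 ≤ w j := by
    intro j; fin_cases j <;> simp [hw] <;> positivity
  have hand : (∑ j : Fin 3, m j * w j) = m 0 * t⁻¹ + m 1 * t + m 2 := by
    rw [Fin.sum_univ_three]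
    simp [hw]
  rw [← hand, Fintype.sum_pow, SQ]
  apply Finset.sum_le_sum
  intro c _
  have hprod_nn : 0 ≤ ∏ k, m (c k) := Finset.prod_nonneg fun k _ => hm _
  by_cases hc : (Finset.univ.filter (fun k => c k = 0)).card
      ≤ (Finset.univ.filter (fun k => c k = 1)).card
  · rw [if_pos hc]
    have p0 : ∏ k ∈ Finset.univ.filter (fun k => c k = 0), w (c k)
        = t⁻¹ ^ (Finset.univ.filter (fun k => c k = 0)).card := by
      rw [Finset.prod_congr rfl (fun k hk => ?_), Finset.prod_const]
      rw [Finset.mem_filter] at hk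
      rw [hk.2]; simp [hw]
    have e2 := Finset.prod_filter_mul_prod_filter_not
      (Finset.univ.filter (fun k => ¬ c k = 0)) (fun k => c k = 1) (fun k => w (c k))
    have hff : (Finset.univ.filter (fun k => ¬ c k = 0)).filter (fun k => c k = 1)
        = Finset.univ.filter (fun k => c k = 1) := by
      rw [Finset.filter_filter]
      apply Finset.filter_congr
      intro k _
      constructor
      · exact fun h => h.2
      · intro h; exact ⟨fun h0 => by rw [h] at h0; exact absurd h0 (by decide), h⟩
    have p1 : ∏ k ∈ (Finset.univ.filter (fun k => ¬ c k = 0)).filter (fun k => c k = 1),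
        w (c k) = t ^ (Finset.univ.filter (fun k => c k = 1)).card := by
      rw [hff, Finset.prod_congr rfl (fun k hk => ?_), Finset.prod_const]
      rw [Finset.mem_filter] at hk
      rw [hk.2]; simp [hw]
    have p2 : ∏ k ∈ (Finset.univ.filter (fun k => ¬ c k = 0)).filter (fun k => ¬ c k = 1),
        w (c k) = 1 := by
      apply Finset.prod_eq_one
      intro k hk
      rw [Finset.filter_filter, Finset.mem_filter] at hk
      rw [fin3_cases (c k) hk.2.1 hk.2.2]; simp [hw]
    have hWeq : ∏ k, w (c k)
        = t⁻¹ ^ (Finset.univ.filter (fun k => c k = 0)).card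
          * t ^ (Finset.univ.filter (fun k => c k = 1)).card := by
      rw [← Finset.prod_filter_mul_prod_filter_not Finset.univ (fun k => c k = 0)
        (fun k => w (c k)), p0, ← e2, p1, p2, mul_one]
    have hW : 1 ≤ ∏ k, w (c k) := by
      rw [hWeq, inv_pow]
      have h1 : t ^ (Finset.univ.filter (fun k => c k = 0)).card
          ≤ t ^ (Finset.univ.filter (fun k => c k = 1)).card := pow_le_pow_right₀ ht hc
      have h2 : (0:ℝ) < t ^ (Finset.univ.filter (fun k => c k = 0)).card := pow_pos ht0 _
      calc (1:ℝ) = (t ^ (Finset.univ.filter (fun k => c k = 0)).card)⁻¹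
            * t ^ (Finset.univ.filter (fun k => c k = 0)).card := by field_simp
        _ ≤ _ := mul_le_mul_of_nonneg_left h1 (by positivity)
    calc ∏ k, m (c k) = (∏ k, m (c k)) * 1 := by ring
      _ ≤ (∏ k, m (c k)) * ∏ k, w (c k) := by
          exact mul_le_mul_of_nonneg_left hW hprod_nn
      _ = ∏ k, m (c k) * w (c k) := Finset.prod_mul_distrib.symm
  · rw [if_neg hc]
    exact Finset.prod_nonneg fun k _ => mul_nonneg (hm _) (hwnn _)

/-! ### Combinatorial lower bound -/

lemma le_SQ (m : Fin 3 → ℝ) (hm : ∀ j, 0 ≤ m j) (n a : ℕ) (h2a : 2*a ≤ n) :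
    (n.choose a : ℝ) * ((n-a).choose a : ℝ) * (m 0 ^ a * m 1 ^ a * m 2 ^ (n - 2*a))
      ≤ SQ m n := by
  classical
  set D := (Finset.univ.powersetCard a).sigma
    (fun S : Finset (Fin n) => Sᶜ.powersetCard a) with hD
  set Φ : (Σ _ : Finset (Fin n), Finset (Fin n)) → (Fin n → Fin 3) :=
    fun ST k => if k ∈ ST.1 then 0 else if k ∈ ST.2 then 1 else 2 with hΦ
  have hmem : ∀ ST ∈ D, ST.1.card = a ∧ ST.2 ⊆ ST.1ᶜ ∧ ST.2.card = a := by
    intro ST hST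
    rw [hD, Finset.mem_sigma, Finset.mem_powersetCard_univ, Finset.mem_powersetCard] at hST
    exact ⟨hST.1, hST.2.1, hST.2.2⟩
  have hf0 : ∀ ST ∈ D, Finset.univ.filter (fun k => Φ ST k = 0) = ST.1 := by
    intro ST hST
    ext k
    simp only [Finset.mem_filter, Finset.mem_univ, true_and, hΦ]
    by_cases h1 : k ∈ ST.1
    · simp [h1]
    · simp only [h1, if_false]
      by_cases h2 : k ∈ ST.2 <;> simp [h1, h2]
  have hf1 : ∀ ST ∈ D, Finset.univ.filter (fun k => Φ ST k = 1) = ST.2 := by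
    intro ST hST
    obtain ⟨hS, hTsub, hT⟩ := hmem ST hST
    ext k
    simp only [Finset.mem_filter, Finset.mem_univ, true_and, hΦ]
    by_cases h2 : k ∈ ST.2
    · have h1 : k ∉ ST.1 := by
        have := hTsub h2
        rwa [Finset.mem_compl] at this
      simp [h1, h2]
    · by_cases h1 : k ∈ ST.1 <;> simp [h1, h2]
  have hinj : ∀ x ∈ D, ∀ y ∈ D, Φ x = Φ y → x = y := by
    intro x hx y hy hxy
    have h1 : x.1 = y.1 := by rw [← hf0 x hx, ← hf0 y hy, hxy]
    have h2 : x.2 = y.2 := by rw [← hf1 x hx, ← hf1 y hy, hxy]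
    exact Sigma.ext h1 (heq_of_eq h2)
  have hprodval : ∀ ST ∈ D, ∏ k, m (Φ ST k)
      = m 0 ^ a * m 1 ^ a * m 2 ^ (n - 2*a) := by
    intro ST hST
    obtain ⟨hS, hTsub, hT⟩ := hmem ST hST
    have e1 : ∏ k ∈ ST.1, m (Φ ST k) = m 0 ^ a := by
      have hv : ∀ k ∈ ST.1, m (Φ ST k) = m 0 := fun k hk => by simp [hΦ, hk]
      rw [Finset.prod_congr rfl hv, Finset.prod_const, hS]
    have e3 : ∏ k ∈ ST.2, m (Φ ST k) = m 1 ^ a := by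
      have hv : ∀ k ∈ ST.2, m (Φ ST k) = m 1 := by
        intro k hk
        have h1 : k ∉ ST.1 := by
          have := hTsub hk
          rwa [Finset.mem_compl] at this
        simp [hΦ, h1, hk]
      rw [Finset.prod_congr rfl hv, Finset.prod_const, hT]
    have e4 : ∏ k ∈ ST.1ᶜ \ ST.2, m (Φ ST k) = m 2 ^ (n - 2*a) := by
      have hv : ∀ k ∈ ST.1ᶜ \ ST.2, m (Φ ST k) = m 2 := by
        intro k hk
        rw [Finset.mem_sdiff, Finset.mem_compl] at hk
        simp [hΦ, hk.1, hk.2]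
      rw [Finset.prod_congr rfl hv, Finset.prod_const]
      congr 1
      rw [Finset.card_sdiff_of_subset hTsub, Finset.card_compl, Fintype.card_fin, hS, hT]
      omega
    calc ∏ k, m (Φ ST k) = (∏ k ∈ ST.1, m (Φ ST k)) * ∏ k ∈ ST.1ᶜ, m (Φ ST k) :=
          (Finset.prod_mul_prod_compl ST.1 _).symm
      _ = (∏ k ∈ ST.1, m (Φ ST k))
          * ((∏ k ∈ ST.1ᶜ \ ST.2, m (Φ ST k)) * ∏ k ∈ ST.2, m (Φ ST k)) := by
          rw [Finset.prod_sdiff hTsub]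
      _ = m 0 ^ a * m 1 ^ a * m 2 ^ (n - 2*a) := by rw [e1, e3, e4]; ring
  have hcard : D.card = n.choose a * (n-a).choose a := by
    rw [hD, Finset.card_sigma]
    rw [Finset.sum_congr rfl (fun S hS => ?_), Finset.sum_const, Finset.card_powersetCard,
      Finset.card_univ, Fintype.card_fin, smul_eq_mul]
    rw [Finset.card_powersetCard, Finset.card_compl, Fintype.card_fin,
      Finset.mem_powersetCard_univ.1 hS]
  rw [SQ, ← Finset.sum_filter]
  have hsub : D.image Φ ⊆ Finset.univ.filter (fun c : Fin n → Fin 3 =>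
      (Finset.univ.filter (fun k => c k = 0)).card
        ≤ (Finset.univ.filter (fun k => c k = 1)).card) := by
    intro cfn hc
    rw [Finset.mem_image] at hc
    obtain ⟨ST, hST, rfl⟩ := hc
    rw [Finset.mem_filter]
    refine ⟨Finset.mem_univ _, ?_⟩
    rw [hf0 ST hST, hf1 ST hST, (hmem ST hST).1, (hmem ST hST).2.2]
  calc (n.choose a : ℝ) * ((n-a).choose a : ℝ) * (m 0 ^ a * m 1 ^ a * m 2 ^ (n - 2*a))
      = ∑ ST ∈ D, ∏ k, m (Φ ST k) := by
        rw [Finset.sum_congr rfl hprodval, Finset.sum_const, hcard]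
        push_cast
        ring
    _ = ∑ cfn ∈ D.image Φ, ∏ k, m (cfn k) := (Finset.sum_image (f := fun cfn => ∏ k, m (cfn k)) hinj).symm
    _ ≤ _ := Finset.sum_le_sum_of_subset_of_nonneg hsub
        (fun c _ _ => Finset.prod_nonneg fun k _ => hm _)

/-! ### Elementary factorial bounds -/

lemma log_one_add_le (t : ℝ) (ht : 0 < t) : t / (1 + t) ≤ Real.log (1 + t) ∧ Real.log (1 + t) ≤ t := by
  constructor
  · have h := Real.log_le_sub_one_of_pos (x := 1/(1+t)) (by positivity)
    rw [Real.log_div one_ne_zero (by positivity), Real.log_one] at h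
    have : -Real.log (1+t) ≤ 1/(1+t) - 1 := by linarith
    have h2 : (1:ℝ)/(1+t) - 1 = -(t/(1+t)) := by field_simp; ring
    linarith [h2 ▸ this]
  · have h := Real.log_le_sub_one_of_pos (x := 1+t) (by positivity)
    linarith

-- (1+1/n)^n ≤ e for n ≥ 1
lemma pow_le_exp_one (n : ℕ) (hn : 1 ≤ n) : (1 + 1/(n:ℝ))^n ≤ Real.exp 1 := by
  have hn' : (0:ℝ) < n := by exact_mod_cast hn
  have h := (log_one_add_le (1/(n:ℝ)) (by positivity)).2
  have hpos : (0:ℝ) < 1 + 1/(n:ℝ) := by positivity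
  have : (n:ℝ) * Real.log (1 + 1/(n:ℝ)) ≤ 1 := by
    calc (n:ℝ) * Real.log (1 + 1/(n:ℝ)) ≤ (n:ℝ) * (1/(n:ℝ)) := by
          apply mul_le_mul_of_nonneg_left h (le_of_lt hn')
      _ = 1 := by field_simp
  calc (1 + 1/(n:ℝ))^n = Real.exp ((n:ℝ) * Real.log (1 + 1/(n:ℝ))) := by
        rw [Real.exp_nat_mul, Real.exp_log hpos]
    _ ≤ Real.exp 1 := Real.exp_le_exp.2 this

-- e ≤ (1+1/n)^(n+1)
lemma exp_one_le_pow (n : ℕ) (hn : 1 ≤ n) : Real.exp 1 ≤ (1 + 1/(n:ℝ))^(n+1) := by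
  have hn' : (0:ℝ) < n := by exact_mod_cast hn
  have h := (log_one_add_le (1/(n:ℝ)) (by positivity)).1
  have hpos : (0:ℝ) < 1 + 1/(n:ℝ) := by positivity
  have key : 1 ≤ ((n:ℝ)+1) * Real.log (1 + 1/(n:ℝ)) := by
    have h2 : (1/(n:ℝ)) / (1 + 1/(n:ℝ)) = 1/((n:ℝ)+1) := by
      field_simp
    rw [h2] at h
    have := mul_le_mul_of_nonneg_left h (by positivity : (0:ℝ) ≤ (n:ℝ)+1)
    calc (1:ℝ) = ((n:ℝ)+1) * (1/((n:ℝ)+1)) := by field_simp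
      _ ≤ _ := this
  calc Real.exp 1 ≤ Real.exp (((n:ℝ)+1) * Real.log (1 + 1/(n:ℝ))) := Real.exp_le_exp.2 key
    _ = (1 + 1/(n:ℝ))^(n+1) := by
        rw [show ((n:ℝ)+1) = ((n+1 : ℕ):ℝ) by push_cast; ring, Real.exp_nat_mul, Real.exp_log hpos]

-- n^n ≤ e^n n!
lemma pow_self_le (n : ℕ) : (n:ℝ)^n ≤ Real.exp 1 ^ n * n.factorial := by
  induction n with
  | zero => simp
  | succ n ih =>
    rcases Nat.eq_zero_or_pos n with h | h
    · subst h; simp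
    have hn' : (0:ℝ) < n := by exact_mod_cast h
    have key : ((n:ℝ)+1)^(n+1) ≤ ((n:ℝ)+1) * Real.exp 1 * (n:ℝ)^n := by
      have h1 : ((n:ℝ)+1)^n ≤ Real.exp 1 * (n:ℝ)^n := by
        have := pow_le_exp_one n h
        have h2 : ((n:ℝ)+1)^n = (1 + 1/(n:ℝ))^n * (n:ℝ)^n := by
          rw [← mul_pow]; congr 1; field_simp
        rw [h2]
        apply mul_le_mul_of_nonneg_right this (by positivity)
      calc ((n:ℝ)+1)^(n+1) = ((n:ℝ)+1) * ((n:ℝ)+1)^n := by ring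
        _ ≤ ((n:ℝ)+1) * (Real.exp 1 * (n:ℝ)^n) := by
            apply mul_le_mul_of_nonneg_left h1 (by positivity)
        _ = ((n:ℝ)+1) * Real.exp 1 * (n:ℝ)^n := by ring
    have hcast : ((n+1:ℕ):ℝ)^(n+1) = ((n:ℝ)+1)^(n+1) := by norm_cast
    rw [hcast]
    calc ((n:ℝ)+1)^(n+1) = ((n:ℝ)+1)^(n+1) := rfl
      _ ≤ ((n:ℝ)+1) * Real.exp 1 * (n:ℝ)^n := key
      _ ≤ ((n:ℝ)+1) * Real.exp 1 * (Real.exp 1 ^ n * n.factorial) := by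
          apply mul_le_mul_of_nonneg_left ih (by positivity)
      _ = Real.exp 1 ^ (n+1) * ((n+1) * n.factorial) := by ring
      _ = Real.exp 1 ^ (n+1) * (n+1).factorial := by
          rw [Nat.factorial_succ]; push_cast; ring

-- e^a a! ≤ e * a^(a+1)  for a ≥ 1
lemma factorial_le_pow (a : ℕ) (ha : 1 ≤ a) :
    Real.exp 1 ^ a * a.factorial ≤ Real.exp 1 * (a:ℝ)^(a+1) := by
  induction a with
  | zero => omega
  | succ a ih =>
    rcases Nat.eq_zero_or_pos a with h | h
    · subst h; simp [Nat.factorial]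
    have hn' : (0:ℝ) < a := by exact_mod_cast h
    have ih' := ih h
    have key : Real.exp 1 * (a:ℝ)^(a+1) ≤ ((a:ℝ)+1)^(a+1) := by
      have := exp_one_le_pow a h
      have h2 : ((a:ℝ)+1)^(a+1) = (1 + 1/(a:ℝ))^(a+1) * (a:ℝ)^(a+1) := by
        rw [← mul_pow]; congr 1; field_simp
      rw [h2]
      apply mul_le_mul_of_nonneg_right this (by positivity)
    calc Real.exp 1 ^ (a+1) * ((a+1).factorial : ℝ)
        = Real.exp 1 * ((a:ℝ)+1) * (Real.exp 1 ^ a * a.factorial) := by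
          rw [Nat.factorial_succ]; push_cast; ring
      _ ≤ Real.exp 1 * ((a:ℝ)+1) * (Real.exp 1 * (a:ℝ)^(a+1)) := by
          apply mul_le_mul_of_nonneg_left ih' (by positivity)
      _ ≤ Real.exp 1 * ((a:ℝ)+1) * ((a:ℝ)+1)^(a+1) := by
          apply mul_le_mul_of_nonneg_left key (by positivity)
      _ = Real.exp 1 * ((a:ℝ)+1)^(a+1+1) := by ring
      _ = Real.exp 1 * ((a+1:ℕ):ℝ)^(a+1+1) := by norm_cast

/-! ### Analysis: the exponent limit -/

lemma log_nat_div_tendsto : Filter.Tendsto (fun n : ℕ => Real.log n / n) Filter.atTop (nhds 0) := by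
  have h := (Real.tendsto_pow_log_div_mul_add_atTop 1 0 1 one_ne_zero).comp
    tendsto_natCast_atTop_atTop
  refine h.congr (fun n => ?_)
  simp [Function.comp]

lemma stirling_bound {n a c : ℕ} (ha : 1 ≤ a) (hc : 1 ≤ c) (hn : n = 2*a + c) :
    (n:ℝ)^n / ((a:ℝ)^(2*a) * (c:ℝ)^c * Real.exp 1^3 * (n:ℝ)^3)
      ≤ (n.choose a : ℝ) * ((n-a).choose a : ℝ) := by
  have han : a ≤ n := by omega
  have hcn : c ≤ n := by omega
  have han' : a ≤ n - a := by omega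
  have hA0 : (0:ℝ) < a := by exact_mod_cast ha
  have hC0 : (0:ℝ) < c := by exact_mod_cast hc
  have hN0 : (0:ℝ) < n := by
    have : 1 ≤ n := by omega
    exact_mod_cast this
  have hfa : (0:ℝ) < (a.factorial : ℝ) := by exact_mod_cast a.factorial_pos
  have hfc : (0:ℝ) < (c.factorial : ℝ) := by exact_mod_cast c.factorial_pos
  have hfn : (0:ℝ) < (n.factorial : ℝ) := by exact_mod_cast n.factorial_pos
  have hchoose : (n.choose a : ℝ) * ((n-a).choose a : ℝ)
      = (n.factorial : ℝ) / ((a.factorial : ℝ) * (a.factorial : ℝ) * (c.factorial : ℝ)) := by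
    rw [Nat.cast_choose ℝ han, Nat.cast_choose ℝ han']
    have h1 : (n - a) - a = c := by omega
    rw [h1]
    have hfna : (0:ℝ) < ((n-a).factorial : ℝ) := by exact_mod_cast (n-a).factorial_pos
    field_simp
  rw [hchoose, div_le_div_iff₀ (by positivity) (by positivity)]
  have key : Real.exp 1 ^ n * ((a.factorial : ℝ) * (a.factorial : ℝ) * (c.factorial : ℝ))
      ≤ (a:ℝ)^(2*a) * (c:ℝ)^c * Real.exp 1^3 * (n:ℝ)^3 := by
    have e1 : Real.exp 1 ^ n * ((a.factorial : ℝ) * (a.factorial : ℝ) * (c.factorial : ℝ))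
        = (Real.exp 1 ^ a * a.factorial) * (Real.exp 1 ^ a * a.factorial)
          * (Real.exp 1 ^ c * c.factorial) := by
      rw [hn, pow_add, two_mul, pow_add]
      ring
    rw [e1]
    calc (Real.exp 1 ^ a * (a.factorial:ℝ)) * (Real.exp 1 ^ a * a.factorial)
          * (Real.exp 1 ^ c * c.factorial)
        ≤ (Real.exp 1 * (a:ℝ)^(a+1)) * (Real.exp 1 * (a:ℝ)^(a+1))
          * (Real.exp 1 * (c:ℝ)^(c+1)) := by
          have hb1 := factorial_le_pow a ha
          have hb2 := factorial_le_pow c hc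
          have h1 : (0:ℝ) ≤ Real.exp 1 ^ a * a.factorial := by positivity
          have h2 : (0:ℝ) ≤ Real.exp 1 ^ c * c.factorial := by positivity
          have h3 : (0:ℝ) ≤ Real.exp 1 * (a:ℝ)^(a+1) := by positivity
          gcongr
      _ = (a:ℝ)^(2*a) * (c:ℝ)^c * Real.exp 1^3 * ((a:ℝ) * (a:ℝ) * (c:ℝ)) := by
          rw [two_mul, pow_add, pow_succ, pow_succ, pow_succ]
          ring
      _ ≤ (a:ℝ)^(2*a) * (c:ℝ)^c * Real.exp 1^3 * ((n:ℝ) * (n:ℝ) * (n:ℝ)) := by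
          have hAn : (a:ℝ) ≤ n := by exact_mod_cast han
          have hCn : (c:ℝ) ≤ n := by exact_mod_cast hcn
          gcongr
      _ = (a:ℝ)^(2*a) * (c:ℝ)^c * Real.exp 1^3 * (n:ℝ)^3 := by ring
  calc (n:ℝ)^n * ((a.factorial : ℝ) * (a.factorial : ℝ) * (c.factorial : ℝ))
      ≤ (Real.exp 1 ^ n * n.factorial)
        * ((a.factorial : ℝ) * (a.factorial : ℝ) * (c.factorial : ℝ)) := by
        have h := pow_self_le n
        gcongr
    _ = (n.factorial : ℝ) * (Real.exp 1 ^ n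
        * ((a.factorial : ℝ) * (a.factorial : ℝ) * (c.factorial : ℝ))) := by ring
    _ ≤ (n.factorial : ℝ) * ((a:ℝ)^(2*a) * (c:ℝ)^c * Real.exp 1^3 * (n:ℝ)^3) := by
        have h2 : (0:ℝ) ≤ (n.factorial : ℝ) := hfn.le
        exact mul_le_mul_of_nonneg_left key h2

lemma main_limit (p q r : ℝ) (hp : 0 < p) (hq : 0 < q) (hr : 0 < r) (hqp : q ≤ p)
    (P : ℕ → ℝ)
    (hub : ∀ n : ℕ, 1 ≤ n → P n ≤ (p * (Real.sqrt (p/q))⁻¹ + q * Real.sqrt (p/q) + r) ^ n)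
    (hlb : ∀ n a : ℕ, 2*a ≤ n →
      (n.choose a : ℝ) * ((n-a).choose a : ℝ) * (p ^ a * q ^ a * r ^ (n - 2*a)) ≤ P n) :
    Filter.Tendsto (fun n : ℕ => -(1/(n:ℝ)) * Real.log (P n)) Filter.atTop
      (nhds (-Real.log (r + 2 * Real.sqrt (p*q)))) := by
  have hpq0 : (0:ℝ) < p * q := by positivity
  set s : ℝ := Real.sqrt (p*q) with hs_def
  have hs : 0 < s := Real.sqrt_pos.2 hpq0
  set B : ℝ := r + 2*s with hB_def
  have hB : 0 < B := by positivity
  set t : ℝ := Real.sqrt (p/q) with ht_def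
  have ht1 : 1 ≤ t := Real.one_le_sqrt.2 ((one_le_div hq).2 hqp)
  have hBt : p * t⁻¹ + q * t + r = B := by
    have hsp2 : Real.sqrt p ^ 2 = p := Real.sq_sqrt hp.le
    have hsq2 : Real.sqrt q ^ 2 = q := Real.sq_sqrt hq.le
    have hsp0 : 0 < Real.sqrt p := Real.sqrt_pos.2 hp
    have hsq0 : 0 < Real.sqrt q := Real.sqrt_pos.2 hq
    have h1 : t = Real.sqrt p / Real.sqrt q := by rw [ht_def, Real.sqrt_div hp.le]
    have h2 : s = Real.sqrt p * Real.sqrt q := by rw [hs_def, Real.sqrt_mul hp.le]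
    have e1 : p * t⁻¹ = s := by
      rw [h1, inv_div, mul_div_assoc', mul_comm p, mul_div_assoc, Real.div_sqrt, mul_comm]
      exact h2.symm
    have e2 : q * t = s := by
      rw [h1, mul_div_assoc', mul_comm q, mul_div_assoc, Real.div_sqrt]
      exact h2.symm
    rw [e1, e2, hB_def]
    ring
  set α : ℝ := s / B with hα_def
  have hα0 : 0 < α := by positivity
  have hα1 : 2*α < 1 := by
    have h1 : 2*α = (2*s)/B := by rw [hα_def]; ring
    rw [h1, div_lt_one hB, hB_def]
    linarith
  have hα2 : 1 - 2*α = r/B := by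
    rw [hα_def]
    field_simp
    rw [hB_def]; ring
  have hα3 : 0 < 1 - 2*α := by rw [hα2]; positivity
  set a : ℕ → ℕ := fun n => ⌊α * n⌋₊ with ha_def
  set c : ℕ → ℕ := fun n => n - 2 * a n with hc_def
  have haub : ∀ n : ℕ, (a n : ℝ) ≤ α * n := by
    intro n
    rw [ha_def]
    exact Nat.floor_le (by positivity)
  have h2an : ∀ n : ℕ, 2 * a n ≤ n := by
    intro n
    have h1 : (2 * (a n : ℝ)) ≤ 2 * α * n := by nlinarith [haub n]
    have h2 : ((2 * a n : ℕ) : ℝ) ≤ (n:ℝ) := by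
      push_cast
      nlinarith [Nat.cast_nonneg (α := ℝ) n]
    exact_mod_cast h2
  have hcn : ∀ n : ℕ, 2 * a n + c n = n := by
    intro n
    have h := h2an n
    have hce : c n = n - 2 * a n := rfl
    omega
  set L : ℕ → ℝ := fun n => (n:ℝ)^n * ((p*q)^(a n) * r^(c n))
      / ((a n:ℝ)^(2*(a n)) * ((c n):ℝ)^(c n) * Real.exp 1^3 * (n:ℝ)^3) with hL_def
  have hevent : ∀ᶠ (n : ℕ) in Filter.atTop, 1 ≤ n ∧ 1 ≤ a n ∧ 1 ≤ c n := by
    have hinf : Filter.Tendsto (fun n : ℕ => α * n) Filter.atTop Filter.atTop :=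
      Filter.Tendsto.const_mul_atTop hα0 tendsto_natCast_atTop_atTop
    have hinf2 : Filter.Tendsto (fun n : ℕ => (1 - 2*α) * n) Filter.atTop Filter.atTop :=
      Filter.Tendsto.const_mul_atTop hα3 tendsto_natCast_atTop_atTop
    filter_upwards [hinf.eventually_ge_atTop 1, hinf2.eventually_ge_atTop 2,
      Filter.eventually_ge_atTop 1] with n h1 h2 h3
    refine ⟨h3, ?_, ?_⟩
    · rw [ha_def]
      exact Nat.le_floor (by exact_mod_cast h1)
    · have h4 : ((2 * a n : ℕ) : ℝ) + 1 ≤ (n:ℝ) := by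
        push_cast
        nlinarith [haub n]
      have h5 : 2 * a n + 1 ≤ n := by exact_mod_cast h4
      have hce : c n = n - 2 * a n := rfl
      omega
  have hPpos : ∀ n : ℕ, 0 < P n := by
    intro n
    refine lt_of_lt_of_le ?_ (hlb n (a n) (h2an n))
    have c1 : 0 < n.choose (a n) := Nat.choose_pos (by have := h2an n; omega)
    have c2 : 0 < (n - a n).choose (a n) := Nat.choose_pos (by have := h2an n; omega)
    have c1' : (0:ℝ) < n.choose (a n) := by exact_mod_cast c1
    have c2' : (0:ℝ) < (n - a n).choose (a n) := by exact_mod_cast c2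
    positivity
  have hK : ∀ᶠ (n : ℕ) in Filter.atTop,
      -Real.log B ≤ -(1/(n:ℝ)) * Real.log (P n) := by
    filter_upwards [Filter.eventually_ge_atTop 1] with n hn
    have hn' : (0:ℝ) < n := by exact_mod_cast hn
    have h1 : P n ≤ B ^ n := by rw [← hBt]; exact hub n hn
    have h2 : Real.log (P n) ≤ (n:ℝ) * Real.log B := by
      calc Real.log (P n) ≤ Real.log (B ^ n) := Real.log_le_log (hPpos n) h1
        _ = (n:ℝ) * Real.log B := by rw [Real.log_pow]
    have h3 : -(1/(n:ℝ)) * ((n:ℝ) * Real.log B) ≤ -(1/(n:ℝ)) * Real.log (P n) :=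
      mul_le_mul_of_nonpos_left h2 (neg_nonpos_of_nonneg (by positivity))
    calc -Real.log B = -(1/(n:ℝ)) * ((n:ℝ) * Real.log B) := by
          field_simp
      _ ≤ -(1/(n:ℝ)) * Real.log (P n) := h3
  have hLpos : ∀ᶠ (n : ℕ) in Filter.atTop, 0 < L n := by
    filter_upwards [hevent] with n hn
    obtain ⟨h1, h2, h3⟩ := hn
    have hn' : (0:ℝ) < n := by exact_mod_cast h1
    have ha' : (0:ℝ) < a n := by exact_mod_cast h2
    have hc' : (0:ℝ) < c n := by exact_mod_cast h3
    rw [hL_def]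
    positivity
  have hup : ∀ᶠ (n : ℕ) in Filter.atTop,
      -(1/(n:ℝ)) * Real.log (P n) ≤ -(1/(n:ℝ)) * Real.log (L n) := by
    filter_upwards [hevent, hLpos] with n hn hL0
    obtain ⟨h1, h2, h3⟩ := hn
    have hn' : (0:ℝ) < n := by exact_mod_cast h1
    have hLP : L n ≤ P n := by
      have hsb := stirling_bound (n := n) (a := a n) (c := c n) h2 h3 (by
        have h := hcn n; omega)
      calc L n = ((n:ℝ)^n / ((a n:ℝ)^(2*(a n)) * ((c n):ℝ)^(c n) * Real.exp 1^3 * (n:ℝ)^3))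
            * ((p*q)^(a n) * r^(c n)) := by rw [hL_def]; ring
        _ ≤ ((n.choose (a n) : ℝ) * ((n - a n).choose (a n) : ℝ))
            * ((p*q)^(a n) * r^(c n)) := by
            have hnn : (0:ℝ) ≤ (p*q)^(a n) * r^(c n) := by positivity
            exact mul_le_mul_of_nonneg_right hsb hnn
        _ = (n.choose (a n) : ℝ) * ((n - a n).choose (a n) : ℝ)
            * (p ^ (a n) * q ^ (a n) * r ^ (n - 2*(a n))) := by
            have hce : c n = n - 2 * a n := rfl
            rw [mul_pow, hce]
        _ ≤ P n := hlb n (a n) (h2an n)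
    have hlog : Real.log (L n) ≤ Real.log (P n) := Real.log_le_log hL0 hLP
    exact mul_le_mul_of_nonpos_left hlog (neg_nonpos_of_nonneg (by positivity))
  -- limit of a n / n
  have hxlim : Filter.Tendsto (fun n : ℕ => (a n:ℝ)/n) Filter.atTop (nhds α) := by
    apply tendsto_of_tendsto_of_tendsto_of_le_of_le'
      (g := fun n : ℕ => α - 1/(n:ℝ)) (h := fun n : ℕ => α + 1/(n:ℝ))
    · simpa using (tendsto_const_nhds (x := α)).sub tendsto_one_div_atTop_nhds_zero_nat
    · simpa using (tendsto_const_nhds (x := α)).add tendsto_one_div_atTop_nhds_zero_nat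
    · filter_upwards [Filter.eventually_ge_atTop 1] with n hn
      have hn' : (0:ℝ) < n := by exact_mod_cast hn
      have h1 : α * n < (a n : ℝ) + 1 := by
        rw [ha_def]
        exact Nat.lt_floor_add_one _
      have h2 : α * n - 1 ≤ (a n : ℝ) := by linarith
      have e : α - 1/(n:ℝ) = (α * n - 1)/n := by field_simp
      rw [e]
      exact (div_le_div_iff_of_pos_right hn').2 h2
    · filter_upwards [Filter.eventually_ge_atTop 1] with n hn
      have hn' : (0:ℝ) < n := by exact_mod_cast hn
      have h1 : (a n : ℝ)/n ≤ α := by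
        rw [div_le_iff₀ hn']
        linarith [haub n]
      have h2 : (0:ℝ) < 1/(n:ℝ) := by positivity
      linarith
  have hclim : Filter.Tendsto (fun n : ℕ => (c n:ℝ)/n) Filter.atTop (nhds (1 - 2*α)) := by
    have hbase : Filter.Tendsto (fun n : ℕ => 1 - 2*((a n:ℝ)/n)) Filter.atTop
        (nhds (1 - 2*α)) := tendsto_const_nhds.sub (hxlim.const_mul 2)
    apply hbase.congr'
    filter_upwards [Filter.eventually_ge_atTop 1] with n hn
    have hn' : (0:ℝ) < n := by exact_mod_cast hn
    have h1 : ((c n : ℕ) : ℝ) = (n:ℝ) - 2*(a n:ℝ) := by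
      have hce : c n = n - 2 * a n := rfl
      rw [hce]
      push_cast [Nat.cast_sub (h2an n)]
      ring
    rw [h1]
    field_simp
  -- the explicit comparison sequence and its limit
  set w : ℕ → ℝ := fun n => 2*((a n:ℝ)/n)*Real.log ((a n:ℝ)/n)
      + ((c n:ℝ)/n)*Real.log ((c n:ℝ)/n)
      - ((a n:ℝ)/n)*Real.log (p*q) - ((c n:ℝ)/n)*Real.log r
      + (3 + 3*Real.log n)/n with hw_def
  have hT4 : Filter.Tendsto (fun n : ℕ => (3 + 3*Real.log n)/(n:ℝ)) Filter.atTop (nhds 0) := by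
    have h := (tendsto_one_div_atTop_nhds_zero_nat.const_mul 3).add
      (log_nat_div_tendsto.const_mul 3)
    have h0 : (3:ℝ)*0 + 3*0 = 0 := by ring
    rw [h0] at h
    refine h.congr (fun n => ?_)
    simp only [div_eq_mul_inv]
    ring
  have hGval : 2*α*Real.log α + (1-2*α)*Real.log (1-2*α)
      - α*Real.log (p*q) - (1-2*α)*Real.log r = -Real.log B := by
    have e5 : Real.log α = Real.log s - Real.log B := by
      rw [hα_def, Real.log_div hs.ne' hB.ne']
    have e6 : Real.log (1-2*α) = Real.log r - Real.log B := by
      rw [hα2, Real.log_div hr.ne' hB.ne']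
    have e7 : Real.log (p*q) = 2 * Real.log s := by
      conv_lhs => rw [← Real.sq_sqrt hpq0.le]
      rw [← hs_def, Real.log_pow]
      push_cast
      ring
    rw [e5, e6, e7]
    ring
  have hwlim : Filter.Tendsto w Filter.atTop (nhds (-Real.log B)) := by
    have hmain : Filter.Tendsto w Filter.atTop
        (nhds (2*α*Real.log α + (1-2*α)*Real.log (1-2*α)
          - α*Real.log (p*q) - (1-2*α)*Real.log r + 0)) := by
      have t1 : Filter.Tendsto (fun n : ℕ => 2*((a n:ℝ)/n)*Real.log ((a n:ℝ)/n))
          Filter.atTop (nhds (2*α*Real.log α)) :=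
        (hxlim.const_mul 2).mul (hxlim.log hα0.ne')
      have t2 : Filter.Tendsto (fun n : ℕ => ((c n:ℝ)/n)*Real.log ((c n:ℝ)/n))
          Filter.atTop (nhds ((1-2*α)*Real.log (1-2*α))) :=
        hclim.mul (hclim.log hα3.ne')
      have t3 : Filter.Tendsto (fun n : ℕ => ((a n:ℝ)/n)*Real.log (p*q))
          Filter.atTop (nhds (α*Real.log (p*q))) := hxlim.mul_const _
      have t4 : Filter.Tendsto (fun n : ℕ => ((c n:ℝ)/n)*Real.log r)
          Filter.atTop (nhds ((1-2*α)*Real.log r)) := hclim.mul_const _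
      exact (((t1.add t2).sub t3).sub t4).add hT4
    rw [add_zero, hGval] at hmain
    exact hmain
  -- identify w with -(1/n) log (L n) eventually
  have hweq : ∀ᶠ (n : ℕ) in Filter.atTop, w n = -(1/(n:ℝ)) * Real.log (L n) := by
    filter_upwards [hevent] with n hn
    obtain ⟨h1, h2, h3⟩ := hn
    have hn' : (0:ℝ) < n := by exact_mod_cast h1
    have hA0 : (0:ℝ) < (a n : ℝ) := by exact_mod_cast h2
    have hC0 : (0:ℝ) < (c n : ℝ) := by exact_mod_cast h3
    have hNeq : (n:ℝ) = 2*(a n:ℝ) + (c n:ℝ) := by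
      have := hcn n
      exact_mod_cast (congrArg (Nat.cast : ℕ → ℝ) this).symm
    have hnum : Real.log ((n:ℝ)^n * ((p*q)^(a n) * r^(c n)))
        = (n:ℝ)*Real.log n + (a n:ℝ)*Real.log (p*q) + (c n:ℝ)*Real.log r := by
      rw [Real.log_mul (by positivity) (by positivity),
        Real.log_mul (by positivity) (by positivity),
        Real.log_pow, Real.log_pow, Real.log_pow]
      ring
    have hden : Real.log ((a n:ℝ)^(2*(a n)) * ((c n):ℝ)^(c n) * Real.exp 1^3 * (n:ℝ)^3)
        = 2*(a n:ℝ)*Real.log (a n:ℝ) + (c n:ℝ)*Real.log (c n:ℝ) + 3 + 3*Real.log n := by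
      rw [Real.log_mul (by positivity) (by positivity),
        Real.log_mul (by positivity) (by positivity),
        Real.log_mul (by positivity) (by positivity),
        Real.log_pow, Real.log_pow, Real.log_pow, Real.log_pow, Real.log_exp]
      push_cast
      ring
    have hlogL : Real.log (L n)
        = (n:ℝ)*Real.log n + (a n:ℝ)*Real.log (p*q) + (c n:ℝ)*Real.log r
          - (2*(a n:ℝ)*Real.log (a n:ℝ) + (c n:ℝ)*Real.log (c n:ℝ) + 3 + 3*Real.log n) := by
      rw [hL_def]
      rw [Real.log_div (by positivity) (by positivity), hnum, hden]
    rw [hw_def]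
    simp only
    rw [hlogL, Real.log_div hA0.ne' hn'.ne', Real.log_div hC0.ne' hn'.ne']
    rw [hNeq]
    have hden : (0:ℝ) < 2*(a n:ℝ) + (c n:ℝ) := by positivity
    field_simp
    ring
  -- conclude by squeezing
  have hLlim : Filter.Tendsto (fun n : ℕ => -(1/(n:ℝ)) * Real.log (L n)) Filter.atTop
      (nhds (-Real.log B)) := hwlim.congr' hweq
  exact tendsto_of_tendsto_of_tendsto_of_le_of_le' tendsto_const_nhds hLlim hK hup


end Stmt17Aux

/-- the error exponent for the crossover event using noisy samples
equals `-log(1 - 4((β₁+β₂)/2 - √(β₁β₂)))`; at `q = 0` it reduces to the noiseless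
exponent. -/
theorem stmt17 (θ q : ℝ) (hθ0 : 0 < θ) (hθ1 : θ < 1 / 2) (hq0 : 0 ≤ q) (hq1 : q < 1 / 2) :
    Filter.Tendsto (fun n : ℕ =>
      -(1 / (n : ℝ)) * Real.log (iidProb (noisy q (isingP θ chainA)) n
        {ys | Ahat ys 0 1 ≤ Ahat ys 0 2}))
      Filter.atTop
      (nhds (-Real.log (1 - 4 * ((beta1 θ q + beta2 θ q) / 2
        - Real.sqrt (beta1 θ q * beta2 θ q))))) ∧
    (q = 0 →
      -Real.log (1 - 4 * ((beta1 θ q + beta2 θ q) / 2 - Real.sqrt (beta1 θ q * beta2 θ q)))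
        = -Real.log (1 - θ * (1 - Real.sqrt (4 * θ * (1 - θ))))) := by
  open Stmt17Aux in
  have hθ1' : θ < 1 := by linarith
  have hq1' : q < 1 := by linarith
  -- positivity facts about the betas
  have hA : (0:ℝ) < (1-q)^3 + q^3 := by
    have h1 : (0:ℝ) < (1-q)^3 := pow_pos (by linarith) 3
    have h2 : (0:ℝ) ≤ q^3 := pow_nonneg hq0 3
    linarith
  have hb1 : 0 < beta1 θ q := by
    rw [beta1]
    have h1 : (0:ℝ) < θ*(1-θ)/2 := by nlinarith
    have h2 : (0:ℝ) ≤ q*(1-q)*((1-θ*(1-θ))/2) := by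
      apply mul_nonneg (mul_nonneg hq0 (by linarith))
      nlinarith [sq_nonneg (1-2*θ)]
    nlinarith [mul_pos hA h1]
  have hb2 : 0 < beta2 θ q := by
    rw [beta2]
    have h1 : (0:ℝ) < θ^2/2 := by positivity
    have h2 : (0:ℝ) ≤ q*(1-q)*((1-θ^2)/2) := by
      apply mul_nonneg (mul_nonneg hq0 (by linarith))
      nlinarith
    nlinarith [mul_pos hA h1]
  have hb12 : beta2 θ q ≤ beta1 θ q := by
    rw [beta1, beta2]
    nlinarith [mul_nonneg (sq_nonneg (1-2*q))
      (mul_nonneg hθ0.le (show (0:ℝ) ≤ 1-2*θ by linarith))]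
  have hrpos : (0:ℝ) < 1 - 2*beta1 θ q - 2*beta2 θ q := by
    rw [beta1, beta2]
    nlinarith [mul_nonneg (sq_nonneg (1-2*q)) (show (0:ℝ) ≤ 1-2*θ by linarith)]
  have hsq : Real.sqrt ((2*beta1 θ q) * (2*beta2 θ q))
      = 2*Real.sqrt (beta1 θ q * beta2 θ q) := by
    rw [show (2*beta1 θ q)*(2*beta2 θ q) = 2^2*(beta1 θ q*beta2 θ q) by ring,
      Real.sqrt_mul (sq_nonneg 2), Real.sqrt_sq (by norm_num)]
  constructor
  · -- the limit statement
    have hνnn : ∀ y, 0 ≤ noisy q (isingP θ chainA) y :=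
      noisy_nonneg θ q hθ0.le hθ1'.le hq0 hq1'.le
    have hmnn : ∀ j, 0 ≤ mass (noisy q (isingP θ chainA)) j := by
      intro j
      rw [mass]
      exact Finset.sum_nonneg fun y _ => hνnn y
    have hm0 := mass0 θ q
    have hm1 := mass1 θ q
    have hm2 := mass2 θ q
    have hP0 : iidProb (noisy q (isingP θ chainA)) 0 {ys | Ahat ys 0 1 ≤ Ahat ys 0 2} = 1 := by
      rw [iidProb]
      simp [Ahat]
    have hub : ∀ n : ℕ, 1 ≤ n →
        iidProb (noisy q (isingP θ chainA)) n {ys | Ahat ys 0 1 ≤ Ahat ys 0 2}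
          ≤ ((2*beta1 θ q) * (Real.sqrt ((2*beta1 θ q)/(2*beta2 θ q)))⁻¹
            + (2*beta2 θ q) * Real.sqrt ((2*beta1 θ q)/(2*beta2 θ q))
            + (1 - 2*beta1 θ q - 2*beta2 θ q)) ^ n := by
      intro n hn
      rw [prob_eq θ q (by omega)]
      have ht1 : 1 ≤ Real.sqrt ((2*beta1 θ q)/(2*beta2 θ q)) :=
        Real.one_le_sqrt.2 ((one_le_div (by linarith)).2 (by linarith))
      have h := SQ_le (mass (noisy q (isingP θ chainA))) hmnn
        (Real.sqrt ((2*beta1 θ q)/(2*beta2 θ q))) ht1 n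
      rw [hm0, hm1, hm2] at h
      exact h
    have hlb : ∀ n a : ℕ, 2*a ≤ n →
        (n.choose a : ℝ) * ((n-a).choose a : ℝ)
          * ((2*beta1 θ q) ^ a * (2*beta2 θ q) ^ a
            * (1 - 2*beta1 θ q - 2*beta2 θ q) ^ (n - 2*a))
          ≤ iidProb (noisy q (isingP θ chainA)) n {ys | Ahat ys 0 1 ≤ Ahat ys 0 2} := by
      intro n a h2a
      rcases Nat.eq_zero_or_pos n with hn0 | hn0
      · subst hn0
        have ha0 : a = 0 := by omega
        subst ha0
        rw [hP0]
        norm_num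
      · rw [prob_eq θ q hn0]
        have h := le_SQ (mass (noisy q (isingP θ chainA))) hmnn n a h2a
        rw [hm0, hm1, hm2] at h
        exact h
    have key := main_limit (2*beta1 θ q) (2*beta2 θ q) (1 - 2*beta1 θ q - 2*beta2 θ q)
      (by linarith) (by linarith) hrpos (by linarith)
      (fun n => iidProb (noisy q (isingP θ chainA)) n {ys | Ahat ys 0 1 ≤ Ahat ys 0 2})
      hub hlb
    have hval : (1 - 2*beta1 θ q - 2*beta2 θ q) + 2*Real.sqrt ((2*beta1 θ q)*(2*beta2 θ q))
        = 1 - 4*((beta1 θ q + beta2 θ q)/2 - Real.sqrt (beta1 θ q * beta2 θ q)) := by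
      rw [hsq]
      ring
    rw [← hval]
    exact key
  · -- the q = 0 specialization
    intro hq
    subst hq
    have hβ1 : beta1 θ 0 = θ*(1-θ)/2 := by rw [beta1]; ring
    have hβ2 : beta2 θ 0 = θ^2/2 := by rw [beta2]; ring
    have h1 : Real.sqrt (θ*(1-θ)/2 * (θ^2/2)) = (θ/2) * Real.sqrt (θ*(1-θ)) := by
      rw [show θ*(1-θ)/2*(θ^2/2) = (θ/2)^2 * (θ*(1-θ)) by ring,
        Real.sqrt_mul (sq_nonneg _), Real.sqrt_sq (by linarith)]
    have h2 : Real.sqrt (4*θ*(1-θ)) = 2*Real.sqrt (θ*(1-θ)) := by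
      rw [show 4*θ*(1-θ) = 2^2*(θ*(1-θ)) by ring,
        Real.sqrt_mul (sq_nonneg 2), Real.sqrt_sq (by norm_num)]
    congr 1
    rw [hβ1, hβ2, h1, h2]
    ring
end
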